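/- arXiv:2512.14886 — 2 statements merged into one kernel-verified Lean document; each statement's English description precedes it below -/
import Mathlib

section
/- Let Ĝ be a signed non-separable bigraph. Then Ĝ is a chordal signed bigraph if and only if Ĝ does not contain any signed graph belonging to F_1 ∪ F_2 ∪ F_3 ∪ F_4 ∪ F_5 ∪ F_6 as an induced subgraph. -/
universe u

/-! ## Basic unsigned notions for bipartite graphs -/

/-- `G` has an induced cycle of length at least 6 (signs, if any, are arbitrary). -/
def HasLongInducedCycle {V : Type u} (G : SimpleGraph V) : Prop :=
  ∃ n : ℕ, 6 ≤ n ∧ ∃ f : ZMod n → V, Function.Injective f ∧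
    ∀ i j : ZMod n, G.Adj (f i) (f j) ↔ (j = i + 1 ∨ i = j + 1)

/-- A graph is separable if it contains an induced `2K₂`. -/
def IsSeparableGraph {V : Type u} (G : SimpleGraph V) : Prop :=
  ∃ a b c d : V, [a, b, c, d].Pairwise (· ≠ ·) ∧
    G.Adj a b ∧ G.Adj c d ∧ ¬ G.Adj a c ∧ ¬ G.Adj a d ∧ ¬ G.Adj b c ∧ ¬ G.Adj b d

/-- An edge `ab` of a bipartite graph is simplicial if every vertex of `N(a) - {b}`
is adjacent to every vertex of `N(b) - {a}`. -/
def SimplicialEdge {V : Type u} (G : SimpleGraph V) (a b : V) : Prop :=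
  G.Adj a b ∧ ∀ c ∈ G.neighborSet a \ {b}, ∀ d ∈ G.neighborSet b \ {a}, G.Adj c d

/-- A canonical ordering of a bigraph with bipartition given by `side`
(`X` is the `side = true` part, `Y` the `side = false` part): the neighbourhoods of
the `x`'s are decreasing and those of the `y`'s are increasing. -/
def IsCanonicalOrdering {V : Type u} (G : SimpleGraph V) (side : V → Bool)
    {α β : ℕ} (x : Fin α → V) (y : Fin β → V) : Prop :=
  Function.Injective x ∧ Function.Injective y ∧
  (∀ w : V, side w = true ↔ w ∈ Set.range x) ∧
  (∀ w : V, side w = false ↔ w ∈ Set.range y) ∧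
  (∀ i j : Fin α, i ≤ j → G.neighborSet (x j) ⊆ G.neighborSet (x i)) ∧
  (∀ i j : Fin β, i ≤ j → G.neighborSet (y i) ⊆ G.neighborSet (y j))

/-- `H` is a non-trivial (i.e. containing at least one edge) connected component
of `G - S`. -/
def IsNontrivialComponentOf {V : Type u} (G : SimpleGraph V) (S H : Set V) : Prop :=
  H ⊆ Sᶜ ∧ (G.induce H).Connected ∧
  (∀ a ∈ H, ∀ b ∈ Sᶜ, G.Adj a b → b ∈ H) ∧
  (∃ a ∈ H, ∃ b ∈ H, G.Adj a b)

/-- `S` minimally separates the non-trivial components `H` and `H'` of `G - S`: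
every vertex of `S` has a neighbour in `H` and a neighbour in `H'`. -/
def MinimallySeparates {V : Type u} (G : SimpleGraph V) (S H H' : Set V) : Prop :=
  IsNontrivialComponentOf G S H ∧ IsNontrivialComponentOf G S H' ∧ H ≠ H' ∧
  ∀ s ∈ S, (∃ a ∈ H, G.Adj s a) ∧ (∃ a ∈ H', G.Adj s a)

/-! ## Signed bigraphs -/

/-- A signed bigraph: a bipartite graph (with bipartition recorded by `side`)
whose edges carry a sign (`true` = positive, `false` = negative). -/
structure SignedBigraph (V : Type u) where
  graph : SimpleGraph V
  sign : V → V → Bool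
  sign_symm : ∀ a b : V, sign a b = sign b a
  side : V → Bool
  bipartite : ∀ ⦃a b : V⦄, graph.Adj a b → side a ≠ side b

namespace SignedBigraph

variable {V : Type u}

def Adj (G : SignedBigraph V) (a b : V) : Prop := G.graph.Adj a b

/-- `N(ab) = (N(a) ∪ N(b)) - {a, b}`. -/
def edgeNbhd (G : SignedBigraph V) (a b : V) : Set V :=
  (G.graph.neighborSet a ∪ G.graph.neighborSet b) \ {a, b}

/-- The edge `ab` is signed simplicial: `N(ab)` induces a positive biclique. -/
def SignedSimplicial (G : SignedBigraph V) (a b : V) : Prop :=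
  G.Adj a b ∧
    ∀ c ∈ G.edgeNbhd a b, ∀ d ∈ G.edgeNbhd a b,
      G.side c ≠ G.side d → (G.Adj c d ∧ G.sign c d = true)

/-- Delete a set of edges from a signed bigraph (keeping all vertices). -/
def deleteEdges (G : SignedBigraph V) (s : Set (Sym2 V)) : SignedBigraph V where
  graph := G.graph.deleteEdges s
  sign := G.sign
  sign_symm := G.sign_symm
  side := G.side
  bipartite := by
    intro a b h
    exact G.bipartite (SimpleGraph.deleteEdges_adj.mp h).1

/-- The induced signed subgraph on a set of vertices. -/
def induce (G : SignedBigraph V) (A : Set V) : SignedBigraph A where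
  graph := G.graph.induce A
  sign a b := G.sign a b
  sign_symm a b := G.sign_symm a b
  side a := G.side a
  bipartite := by
    intro a b h
    exact G.bipartite h

/-- A chordal signed bigraph: the edges can be ordered `e₁, …, e_m` so that each `eᵢ`
is a signed simplicial edge of the signed bigraph obtained by deleting `e₁, …, e_{i-1}`. -/
def IsChordal (G : SignedBigraph V) : Prop :=
  ∃ l : List (Sym2 V), l.Nodup ∧ (∀ e, e ∈ G.graph.edgeSet ↔ e ∈ l) ∧
    ∀ (i : ℕ) (h : i < l.length), ∃ a b : V,
      l.get ⟨i, h⟩ = s(a, b) ∧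
      (G.deleteEdges {e | e ∈ l.take i}).SignedSimplicial a b

/-! ## Forbidden patterns F₁ – F₆, D, long cycles -/

/-- `G` contains the all-negative 4-cycle `F₁` as an induced subgraph. -/
def HasF1 (G : SignedBigraph V) : Prop :=
  ∃ u1 u2 v1 v2 : V,
    [u1, u2, v1, v2].Pairwise (· ≠ ·) ∧
    G.Adj u1 v1 ∧ G.Adj u1 v2 ∧ G.Adj u2 v1 ∧ G.Adj u2 v2 ∧
    ¬ G.Adj u1 u2 ∧ ¬ G.Adj v1 v2 ∧
    G.sign u1 v1 = false ∧ G.sign u1 v2 = false ∧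
    G.sign u2 v1 = false ∧ G.sign u2 v2 = false

/-- `G` contains a member of `F₂` (a signed `K_{2,3}`) as an induced subgraph. -/
def HasF2 (G : SignedBigraph V) : Prop :=
  ∃ u1 u2 v1 v2 v3 : V,
    [u1, u2, v1, v2, v3].Pairwise (· ≠ ·) ∧
    G.Adj u1 v1 ∧ G.Adj u1 v2 ∧ G.Adj u1 v3 ∧
    G.Adj u2 v1 ∧ G.Adj u2 v2 ∧ G.Adj u2 v3 ∧
    ¬ G.Adj u1 u2 ∧ ¬ G.Adj v1 v2 ∧ ¬ G.Adj v1 v3 ∧ ¬ G.Adj v2 v3 ∧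
    G.sign u1 v1 = false ∧ G.sign u1 v2 = false ∧
    G.sign u2 v2 = false ∧ G.sign u2 v3 = false

/-- `G` contains a member of `F₃` (a signed `K_{2,4}`) as an induced subgraph. -/
def HasF3 (G : SignedBigraph V) : Prop :=
  ∃ u1 u2 v1 v2 v3 v4 : V,
    [u1, u2, v1, v2, v3, v4].Pairwise (· ≠ ·) ∧
    G.Adj u1 v1 ∧ G.Adj u1 v2 ∧ G.Adj u1 v3 ∧ G.Adj u1 v4 ∧
    G.Adj u2 v1 ∧ G.Adj u2 v2 ∧ G.Adj u2 v3 ∧ G.Adj u2 v4 ∧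
    ¬ G.Adj u1 u2 ∧ ¬ G.Adj v1 v2 ∧ ¬ G.Adj v1 v3 ∧ ¬ G.Adj v1 v4 ∧
    ¬ G.Adj v2 v3 ∧ ¬ G.Adj v2 v4 ∧ ¬ G.Adj v3 v4 ∧
    G.sign u1 v1 = false ∧ G.sign u1 v2 = false ∧
    G.sign u2 v3 = false ∧ G.sign u2 v4 = false

/-- `G` contains a member of `F₄` (a signed `K_{3,3}` with negative perfect matching)
as an induced subgraph. -/
def HasF4 (G : SignedBigraph V) : Prop :=
  ∃ u1 u2 u3 v1 v2 v3 : V,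
    [u1, u2, u3, v1, v2, v3].Pairwise (· ≠ ·) ∧
    G.Adj u1 v1 ∧ G.Adj u1 v2 ∧ G.Adj u1 v3 ∧
    G.Adj u2 v1 ∧ G.Adj u2 v2 ∧ G.Adj u2 v3 ∧
    G.Adj u3 v1 ∧ G.Adj u3 v2 ∧ G.Adj u3 v3 ∧
    ¬ G.Adj u1 u2 ∧ ¬ G.Adj u1 u3 ∧ ¬ G.Adj u2 u3 ∧
    ¬ G.Adj v1 v2 ∧ ¬ G.Adj v1 v3 ∧ ¬ G.Adj v2 v3 ∧
    G.sign u1 v1 = false ∧ G.sign u2 v2 = false ∧ G.sign u3 v3 = false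

/-- `G` contains a member of `F₅` as an induced subgraph. -/
def HasF5 (G : SignedBigraph V) : Prop :=
  ∃ x1 x2 x3 y1 y2 y3 : V,
    [x1, x2, x3, y1, y2, y3].Pairwise (· ≠ ·) ∧
    G.Adj x1 y1 ∧ G.Adj x1 y2 ∧ ¬ G.Adj x1 y3 ∧
    G.Adj x2 y1 ∧ G.Adj x2 y2 ∧ G.Adj x2 y3 ∧
    G.Adj x3 y1 ∧ G.Adj x3 y2 ∧ G.Adj x3 y3 ∧
    ¬ G.Adj x1 x2 ∧ ¬ G.Adj x1 x3 ∧ ¬ G.Adj x2 x3 ∧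
    ¬ G.Adj y1 y2 ∧ ¬ G.Adj y1 y3 ∧ ¬ G.Adj y2 y3 ∧
    G.sign x2 y1 = false ∧ G.sign x3 y2 = false

/-- `G` contains a member of `F₆` as an induced subgraph. -/
def HasF6 (G : SignedBigraph V) : Prop :=
  ∃ x1 x2 x3 x4 y1 y2 y3 y4 : V,
    [x1, x2, x3, x4, y1, y2, y3, y4].Pairwise (· ≠ ·) ∧
    G.Adj x1 y1 ∧ G.Adj x1 y2 ∧ ¬ G.Adj x1 y3 ∧ ¬ G.Adj x1 y4 ∧
    G.Adj x2 y1 ∧ G.Adj x2 y2 ∧ ¬ G.Adj x2 y3 ∧ ¬ G.Adj x2 y4 ∧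
    G.Adj x3 y1 ∧ G.Adj x3 y2 ∧ G.Adj x3 y3 ∧ G.Adj x3 y4 ∧
    G.Adj x4 y1 ∧ G.Adj x4 y2 ∧ G.Adj x4 y3 ∧ G.Adj x4 y4 ∧
    ¬ G.Adj x1 x2 ∧ ¬ G.Adj x1 x3 ∧ ¬ G.Adj x1 x4 ∧
    ¬ G.Adj x2 x3 ∧ ¬ G.Adj x2 x4 ∧ ¬ G.Adj x3 x4 ∧
    ¬ G.Adj y1 y2 ∧ ¬ G.Adj y1 y3 ∧ ¬ G.Adj y1 y4 ∧
    ¬ G.Adj y2 y3 ∧ ¬ G.Adj y2 y4 ∧ ¬ G.Adj y3 y4 ∧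
    G.sign x1 y1 = false ∧ G.sign x2 y1 = false ∧ G.sign x3 y2 = false ∧
    G.sign x4 y3 = false ∧ G.sign x4 y4 = false

/-- `G` contains a member of `D` (a 6-cycle `x₁y₁x₂y₃x₃y₂x₁` plus a negative chord
`x₂y₂`) as an induced subgraph. -/
def HasD (G : SignedBigraph V) : Prop :=
  ∃ x1 x2 x3 y1 y2 y3 : V,
    [x1, x2, x3, y1, y2, y3].Pairwise (· ≠ ·) ∧
    G.Adj x1 y1 ∧ G.Adj y1 x2 ∧ G.Adj x2 y3 ∧ G.Adj y3 x3 ∧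
    G.Adj x3 y2 ∧ G.Adj y2 x1 ∧
    G.Adj x2 y2 ∧ G.sign x2 y2 = false ∧
    ¬ G.Adj x1 y3 ∧ ¬ G.Adj x3 y1 ∧
    ¬ G.Adj x1 x2 ∧ ¬ G.Adj x1 x3 ∧ ¬ G.Adj x2 x3 ∧
    ¬ G.Adj y1 y2 ∧ ¬ G.Adj y1 y3 ∧ ¬ G.Adj y2 y3

/-- `G` contains an induced signed cycle of length at least 6. -/
def HasLongCycle (G : SignedBigraph V) : Prop :=
  HasLongInducedCycle G.graph

/-! ## Minimal forbidden patterns M₁ – M₅ for complete bigraphs -/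

def HasM1 (G : SignedBigraph V) : Prop := G.HasF1

def HasM2 (G : SignedBigraph V) : Prop :=
  ∃ u1 u2 v1 v2 v3 : V,
    [u1, u2, v1, v2, v3].Pairwise (· ≠ ·) ∧
    G.Adj u1 v1 ∧ G.Adj u1 v2 ∧ G.Adj u1 v3 ∧
    G.Adj u2 v1 ∧ G.Adj u2 v2 ∧ G.Adj u2 v3 ∧
    ¬ G.Adj u1 u2 ∧ ¬ G.Adj v1 v2 ∧ ¬ G.Adj v1 v3 ∧ ¬ G.Adj v2 v3 ∧
    G.sign u1 v1 = false ∧ G.sign u1 v2 = false ∧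
    G.sign u2 v2 = false ∧ G.sign u2 v3 = false ∧
    G.sign u1 v3 = true ∧ G.sign u2 v1 = true

def HasM3 (G : SignedBigraph V) : Prop :=
  ∃ u1 u2 v1 v2 v3 v4 : V,
    [u1, u2, v1, v2, v3, v4].Pairwise (· ≠ ·) ∧
    G.Adj u1 v1 ∧ G.Adj u1 v2 ∧ G.Adj u1 v3 ∧ G.Adj u1 v4 ∧
    G.Adj u2 v1 ∧ G.Adj u2 v2 ∧ G.Adj u2 v3 ∧ G.Adj u2 v4 ∧
    ¬ G.Adj u1 u2 ∧ ¬ G.Adj v1 v2 ∧ ¬ G.Adj v1 v3 ∧ ¬ G.Adj v1 v4 ∧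
    ¬ G.Adj v2 v3 ∧ ¬ G.Adj v2 v4 ∧ ¬ G.Adj v3 v4 ∧
    G.sign u1 v1 = false ∧ G.sign u1 v2 = false ∧
    G.sign u2 v3 = false ∧ G.sign u2 v4 = false ∧
    G.sign u1 v3 = true ∧ G.sign u1 v4 = true ∧
    G.sign u2 v1 = true ∧ G.sign u2 v2 = true

def HasM4 (G : SignedBigraph V) : Prop :=
  ∃ u1 u2 u3 v1 v2 v3 : V,
    [u1, u2, u3, v1, v2, v3].Pairwise (· ≠ ·) ∧
    G.Adj u1 v1 ∧ G.Adj u1 v2 ∧ G.Adj u1 v3 ∧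
    G.Adj u2 v1 ∧ G.Adj u2 v2 ∧ G.Adj u2 v3 ∧
    G.Adj u3 v1 ∧ G.Adj u3 v2 ∧ G.Adj u3 v3 ∧
    ¬ G.Adj u1 u2 ∧ ¬ G.Adj u1 u3 ∧ ¬ G.Adj u2 u3 ∧
    ¬ G.Adj v1 v2 ∧ ¬ G.Adj v1 v3 ∧ ¬ G.Adj v2 v3 ∧
    G.sign u1 v1 = false ∧ G.sign u2 v2 = false ∧ G.sign u3 v3 = false ∧
    G.sign u1 v2 = true ∧ G.sign u1 v3 = true ∧ G.sign u2 v1 = true ∧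
    G.sign u2 v3 = true ∧ G.sign u3 v1 = true ∧ G.sign u3 v2 = true

def HasM5 (G : SignedBigraph V) : Prop :=
  ∃ x1 x2 x3 y1 y2 y3 : V,
    [x1, x2, x3, y1, y2, y3].Pairwise (· ≠ ·) ∧
    G.Adj x1 y1 ∧ G.Adj x1 y2 ∧ G.Adj x1 y3 ∧
    G.Adj x2 y1 ∧ G.Adj x2 y2 ∧ G.Adj x2 y3 ∧
    G.Adj x3 y1 ∧ G.Adj x3 y2 ∧ G.Adj x3 y3 ∧
    ¬ G.Adj x1 x2 ∧ ¬ G.Adj x1 x3 ∧ ¬ G.Adj x2 x3 ∧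
    ¬ G.Adj y1 y2 ∧ ¬ G.Adj y1 y3 ∧ ¬ G.Adj y2 y3 ∧
    G.sign x1 y1 = false ∧ G.sign x1 y2 = false ∧
    G.sign x2 y2 = false ∧ G.sign x3 y3 = false ∧
    G.sign x1 y3 = true ∧ G.sign x2 y1 = true ∧ G.sign x2 y3 = true ∧
    G.sign x3 y1 = true ∧ G.sign x3 y2 = true

/-! ## The patterns W₁ – W₆ (relativized to an ambient vertex set `A`, with the
distinguished vertices being exactly the vertices in `S`). -/

def HasW1In (G : SignedBigraph V) (A S : Set V) : Prop :=
  ∃ u y x z : V, u ∈ A ∧ y ∈ A ∧ x ∈ A ∧ z ∈ A ∧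
    [u, y, x, z].Pairwise (· ≠ ·) ∧
    G.Adj u y ∧ G.Adj u z ∧ G.Adj x y ∧ G.Adj x z ∧
    ¬ G.Adj u x ∧ ¬ G.Adj y z ∧
    G.sign x y = false ∧ G.sign x z = false ∧
    x ∈ S ∧ u ∉ S ∧ y ∉ S ∧ z ∉ S

def HasW2In (G : SignedBigraph V) (A S : Set V) : Prop :=
  ∃ u y v z p : V, u ∈ A ∧ y ∈ A ∧ v ∈ A ∧ z ∈ A ∧ p ∈ A ∧
    [u, y, v, z, p].Pairwise (· ≠ ·) ∧
    G.Adj u y ∧ G.Adj u z ∧ G.Adj v y ∧ G.Adj v z ∧ G.Adj p v ∧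
    ¬ G.Adj u v ∧ ¬ G.Adj y z ∧ ¬ G.Adj p u ∧ ¬ G.Adj p y ∧ ¬ G.Adj p z ∧
    G.sign v y = false ∧ G.sign v z = false ∧
    p ∈ S ∧ u ∉ S ∧ y ∉ S ∧ v ∉ S ∧ z ∉ S

def HasW3In (G : SignedBigraph V) (A S : Set V) : Prop :=
  ∃ u y v z p : V, u ∈ A ∧ y ∈ A ∧ v ∈ A ∧ z ∈ A ∧ p ∈ A ∧
    [u, y, v, z, p].Pairwise (· ≠ ·) ∧
    G.Adj u y ∧ G.Adj u z ∧ G.Adj v y ∧ G.Adj v z ∧ G.Adj p v ∧ G.Adj p u ∧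
    ¬ G.Adj u v ∧ ¬ G.Adj y z ∧ ¬ G.Adj p y ∧ ¬ G.Adj p z ∧
    G.sign v y = false ∧ G.sign v z = false ∧ G.sign p u = false ∧
    p ∈ S ∧ u ∉ S ∧ y ∉ S ∧ v ∉ S ∧ z ∉ S

def HasW4In (G : SignedBigraph V) (A S : Set V) : Prop :=
  ∃ u y c z p q : V, u ∈ A ∧ y ∈ A ∧ c ∈ A ∧ z ∈ A ∧ p ∈ A ∧ q ∈ A ∧
    [u, y, c, z, p, q].Pairwise (· ≠ ·) ∧
    G.Adj u y ∧ G.Adj u z ∧ G.Adj c y ∧ G.Adj c z ∧ G.Adj p c ∧ G.Adj p u ∧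
    G.Adj q p ∧
    ¬ G.Adj u c ∧ ¬ G.Adj y z ∧ ¬ G.Adj p y ∧ ¬ G.Adj p z ∧
    ¬ G.Adj q u ∧ ¬ G.Adj q y ∧ ¬ G.Adj q c ∧ ¬ G.Adj q z ∧
    G.sign c y = false ∧ G.sign c z = false ∧ G.sign p u = false ∧
    q ∈ S ∧ u ∉ S ∧ y ∉ S ∧ c ∉ S ∧ z ∉ S ∧ p ∉ S

def HasW5In (G : SignedBigraph V) (A S : Set V) : Prop :=
  ∃ u y v z x : V, u ∈ A ∧ y ∈ A ∧ v ∈ A ∧ z ∈ A ∧ x ∈ A ∧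
    [u, y, v, z, x].Pairwise (· ≠ ·) ∧
    G.Adj u y ∧ G.Adj u z ∧ G.Adj v y ∧ G.Adj v z ∧ G.Adj x v ∧ G.Adj x u ∧
    ¬ G.Adj u v ∧ ¬ G.Adj y z ∧ ¬ G.Adj x y ∧ ¬ G.Adj x z ∧
    G.sign v y = false ∧ G.sign x u = false ∧
    x ∈ S ∧ y ∈ S ∧ u ∉ S ∧ v ∉ S ∧ z ∉ S

def HasW6In (G : SignedBigraph V) (A S : Set V) : Prop :=
  ∃ u y v z x : V, u ∈ A ∧ y ∈ A ∧ v ∈ A ∧ z ∈ A ∧ x ∈ A ∧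
    [u, y, v, z, x].Pairwise (· ≠ ·) ∧
    G.Adj u y ∧ G.Adj u z ∧ G.Adj v y ∧ G.Adj v z ∧ G.Adj x v ∧
    ¬ G.Adj u v ∧ ¬ G.Adj y z ∧ ¬ G.Adj x u ∧ ¬ G.Adj x y ∧ ¬ G.Adj x z ∧
    G.sign v y = false ∧
    x ∈ S ∧ y ∈ S ∧ u ∉ S ∧ v ∉ S ∧ z ∉ S

/-! ## Tadpoles, sums and joins -/

/-- The vertex set of a tadpole with heads `w, y, z` and path vertices `x`. -/
def tadVerts {n : ℕ} (w y z : V) (x : Fin n → V) : Set V :=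
  {w, y, z} ∪ Set.range x

/-- The data `(w, y, z, x)` forms an induced tadpole in `G`:
`w, y, z, x ⟨k⟩` induce a 4-cycle whose edges `x ⟨k⟩ y` and `x ⟨k⟩ z` are negative,
together with the induced path `x ⟨k⟩, x ⟨k-1⟩, …, x 0`; the vertex `x 0` is the end
and `w, y, z` are the heads.  If `t2 = true` the tadpole is of type 2: there is
additionally a negative edge from `w` to `x ⟨k-1⟩`.
(The paper's parameter `k ≥ 1` corresponds to `k + 1` here.) -/
structure IsInducedTadpole (G : SignedBigraph V) (k : ℕ) (t2 : Bool)
    (w y z : V) (x : Fin (k + 1) → V) : Prop where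
  t2_len : t2 = true → 1 ≤ k
  inj : Function.Injective x
  w_notmem : ∀ i, w ≠ x i
  y_notmem : ∀ i, y ≠ x i
  z_notmem : ∀ i, z ≠ x i
  wy : w ≠ y
  wz : w ≠ z
  yz : y ≠ z
  adj_wy : G.Adj w y
  adj_wz : G.Adj w z
  not_adj_yz : ¬ G.Adj y z
  adj_path : ∀ i j : Fin (k + 1), G.Adj (x i) (x j) ↔ (i.1 + 1 = j.1 ∨ j.1 + 1 = i.1)
  adj_y : ∀ i : Fin (k + 1), G.Adj y (x i) ↔ i.1 = k
  adj_z : ∀ i : Fin (k + 1), G.Adj z (x i) ↔ i.1 = k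
  adj_w : ∀ i : Fin (k + 1), G.Adj w (x i) ↔ (t2 = true ∧ i.1 + 1 = k)
  sign_y : ∀ i : Fin (k + 1), i.1 = k → G.sign (x i) y = false
  sign_z : ∀ i : Fin (k + 1), i.1 = k → G.sign (x i) z = false
  sign_w : ∀ i : Fin (k + 1), t2 = true → i.1 + 1 = k → G.sign w (x i) = false

/-- `G` contains a sum of two tadpoles (identified at their ends) as an induced
subgraph. -/
def HasTadpoleSum (G : SignedBigraph V) : Prop :=
  ∃ (k k' : ℕ) (t t' : Bool) (w y z w' y' z' : V)
    (x : Fin (k + 1) → V) (x' : Fin (k' + 1) → V),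
    G.IsInducedTadpole k t w y z x ∧ G.IsInducedTadpole k' t' w' y' z' x' ∧
    x 0 = x' 0 ∧
    tadVerts w y z x ∩ tadVerts w' y' z' x' = {x 0} ∧
    ∀ a ∈ tadVerts w y z x, ∀ b ∈ tadVerts w' y' z' x',
      a ≠ x 0 → b ≠ x' 0 → ¬ G.Adj a b

/-- `G` contains a join of two tadpoles as an induced subgraph: two disjoint induced
tadpoles such that the edges between them are exactly those joining the end of each
tadpole to all vertices of the other tadpole in the opposite partite set; all these
edges are positive, except that the edge from an end to the head `w` of the other
tadpole may be of either sign when that tadpole is a member of `W₁` (i.e. has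
`k = 0` and is of type 1), in which case the ends are required to be adjacent. -/
def HasTadpoleJoin (G : SignedBigraph V) : Prop :=
  ∃ (k k' : ℕ) (t t' : Bool) (w y z w' y' z' : V)
    (x : Fin (k + 1) → V) (x' : Fin (k' + 1) → V),
    G.IsInducedTadpole k t w y z x ∧ G.IsInducedTadpole k' t' w' y' z' x' ∧
    Disjoint (tadVerts w y z x) (tadVerts w' y' z' x') ∧
    (∀ a ∈ tadVerts w y z x, ∀ b ∈ tadVerts w' y' z' x',
      (G.Adj a b ↔ ((a = x 0 ∨ b = x' 0) ∧ G.side a ≠ G.side b))) ∧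
    ((k = 0 ∧ t = false) ∨ (k' = 0 ∧ t' = false) → G.side (x 0) ≠ G.side (x' 0)) ∧
    (∀ a ∈ tadVerts w y z x, ∀ b ∈ tadVerts w' y' z' x', G.Adj a b →
      ¬ (a = x 0 ∧ b = w' ∧ k' = 0 ∧ t' = false) →
      ¬ (a = w ∧ b = x' 0 ∧ k = 0 ∧ t = false) →
      G.sign a b = true)

/-- `G` contains a member of
`ℱ = F₁ ∪ F₂ ∪ F₃ ∪ F₄ ∪ F₅ ∪ F₆ ∪ 𝒞 ∪ D ∪ 𝒮 ∪ 𝒥` as an induced subgraph. -/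
def HasForbidden (G : SignedBigraph V) : Prop :=
  G.HasF1 ∨ G.HasF2 ∨ G.HasF3 ∨ G.HasF4 ∨ G.HasF5 ∨ G.HasF6 ∨
  G.HasLongCycle ∨ G.HasD ∨ G.HasTadpoleSum ∨ G.HasTadpoleJoin

/-- `G` is `ℱ`-free. -/
def FFree (G : SignedBigraph V) : Prop := ¬ G.HasForbidden

end SignedBigraph

/-! ## Concrete complete signed bipartite graphs (for the graphs M₁ – M₅) -/

/-- The complete bipartite graph on `Fin a ⊕ Fin b`. -/
def cbsGraph (a b : ℕ) : SimpleGraph (Fin a ⊕ Fin b) where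
  Adj u v := u.isLeft ≠ v.isLeft
  symm := ⟨fun _ _ h => Ne.symm h⟩
  loopless := ⟨fun _ h => h rfl⟩

def cbsSign {a b : ℕ} (sgn : Fin a → Fin b → Bool) :
    Fin a ⊕ Fin b → Fin a ⊕ Fin b → Bool
  | Sum.inl i, Sum.inr j => sgn i j
  | Sum.inr j, Sum.inl i => sgn i j
  | _, _ => true

/-- The complete signed bipartite graph with parts `Fin a`, `Fin b`, and signs given
by `sgn`. -/
def completeSignedBigraph (a b : ℕ) (sgn : Fin a → Fin b → Bool) :
    SignedBigraph (Fin a ⊕ Fin b) where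
  graph := cbsGraph a b
  sign := cbsSign sgn
  sign_symm := by
    intro u v
    cases u <;> cases v <;> rfl
  side := Sum.isLeft
  bipartite := fun _ _ h => h

/-- `M₁`: the all-negative 4-cycle. -/
def Mgraph1 : SignedBigraph (Fin 2 ⊕ Fin 2) :=
  completeSignedBigraph 2 2 (fun _ _ => false)

/-- `M₂`. -/
def Mgraph2 : SignedBigraph (Fin 2 ⊕ Fin 3) :=
  completeSignedBigraph 2 3
    (fun i j => ! decide ((i = 0 ∧ (j = 0 ∨ j = 1)) ∨ (i = 1 ∧ (j = 1 ∨ j = 2))))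

/-- `M₃`. -/
def Mgraph3 : SignedBigraph (Fin 2 ⊕ Fin 4) :=
  completeSignedBigraph 2 4
    (fun i j => ! decide ((i = 0 ∧ (j = 0 ∨ j = 1)) ∨ (i = 1 ∧ (j = 2 ∨ j = 3))))

/-- `M₄`. -/
def Mgraph4 : SignedBigraph (Fin 3 ⊕ Fin 3) :=
  completeSignedBigraph 3 3 (fun i j => ! decide ((i : ℕ) = (j : ℕ)))

/-- `M₅`. -/
def Mgraph5 : SignedBigraph (Fin 3 ⊕ Fin 3) :=
  completeSignedBigraph 3 3
    (fun i j => ! decide ((i = 0 ∧ (j = 0 ∨ j = 1)) ∨ (i = 1 ∧ j = 1) ∨ (i = 2 ∧ j = 2)))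

/-! ### Auxiliary development -/

namespace SignedBigraph

variable {V : Type u}

/-- Neighbour set shorthand. -/
def Ns (G : SignedBigraph V) (a : V) : Set V := G.graph.neighborSet a

lemma mem_Ns {G : SignedBigraph V} {a b : V} : b ∈ G.Ns a ↔ G.Adj a b := Iff.rfl

lemma memNs (G : SignedBigraph V) (a b : V) : b ∈ G.Ns a ↔ G.Adj a b := Iff.rfl

lemma adj_symm {G : SignedBigraph V} {a b : V} (h : G.Adj a b) : G.Adj b a := h.symm

lemma ne_of_adj {G : SignedBigraph V} {a b : V} (h : G.Adj a b) : a ≠ b :=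
  SimpleGraph.Adj.ne h

lemma bool_eq_of_ne_ne {a b c : Bool} (h : a ≠ c) (h' : b ≠ c) : a = b := by
  cases a <;> cases b <;> cases c <;> simp_all

lemma not_adj_of_side_eq {G : SignedBigraph V} {a b : V} (h : G.side a = G.side b) :
    ¬ G.Adj a b := fun hadj => G.bipartite hadj h

lemma side_eq_of_adj_adj {G : SignedBigraph V} {a b c : V}
    (h1 : G.Adj a c) (h2 : G.Adj b c) : G.side a = G.side b :=
  bool_eq_of_ne_ne (G.bipartite h1) (G.bipartite h2)

lemma ne_of_side_ne {G : SignedBigraph V} {a b : V} (h : G.side a ≠ G.side b) : a ≠ b :=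
  fun he => h (he ▸ rfl)

/-- A negative edge. -/
def NegE (G : SignedBigraph V) (a b : V) : Prop := G.Adj a b ∧ G.sign a b = false

/-- A locally minimal edge. -/
def LocMin (G : SignedBigraph V) (u v : V) : Prop :=
  G.Adj u v ∧ (∀ c ∈ G.Ns u, G.Ns v ⊆ G.Ns c) ∧ (∀ d ∈ G.Ns v, G.Ns u ⊆ G.Ns d)

/-- Condition (a): all cross pairs around the edge `uv` are positive. -/
def GoodA (G : SignedBigraph V) (u v : V) : Prop :=
  ∀ c ∈ G.Ns u, c ≠ v → ∀ d ∈ G.Ns v, d ≠ u → G.sign c d = true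

lemma LocMin.symm' {G : SignedBigraph V} {u v : V} (h : G.LocMin u v) : G.LocMin v u :=
  ⟨h.1.symm, h.2.2, h.2.1⟩

lemma GoodA.symm' {G : SignedBigraph V} {u v : V} (h : G.GoodA u v) : G.GoodA v u := by
  intro c hc hcv d hd hdu
  rw [G.sign_symm]
  exact h d hd hdu c hc hcv

lemma sign_false_of_not_true {G : SignedBigraph V} {a b : V} (h : ¬ G.sign a b = true) :
    G.sign a b = false := by cases hs : G.sign a b <;> simp_all

/-! ### Pattern constructors -/

section mk
variable {G : SignedBigraph V}

lemma pairwise4 {a b c d : V} (h1 : a ≠ b) (h2 : a ≠ c) (h3 : a ≠ d) (h4 : b ≠ c)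
    (h5 : b ≠ d) (h6 : c ≠ d) : [a, b, c, d].Pairwise (· ≠ ·) := by
  simp [List.pairwise_cons, h1, h2, h3, h4, h5, h6]

lemma pairwise5 {a b c d e : V} (h1 : a ≠ b) (h2 : a ≠ c) (h3 : a ≠ d) (h4 : a ≠ e)
    (h5 : b ≠ c) (h6 : b ≠ d) (h7 : b ≠ e) (h8 : c ≠ d) (h9 : c ≠ e) (h10 : d ≠ e) :
    [a, b, c, d, e].Pairwise (· ≠ ·) := by
  simp [List.pairwise_cons, *]

lemma pairwise6 {a b c d e f : V} (h1 : a ≠ b) (h2 : a ≠ c) (h3 : a ≠ d) (h4 : a ≠ e)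
    (h5 : a ≠ f) (h6 : b ≠ c) (h7 : b ≠ d) (h8 : b ≠ e) (h9 : b ≠ f) (h10 : c ≠ d)
    (h11 : c ≠ e) (h12 : c ≠ f) (h13 : d ≠ e) (h14 : d ≠ f) (h15 : e ≠ f) :
    [a, b, c, d, e, f].Pairwise (· ≠ ·) := by
  simp [List.pairwise_cons, *]

lemma pairwise8 {a b c d e f g h : V} (h1 : a ≠ b) (h2 : a ≠ c) (h3 : a ≠ d) (h4 : a ≠ e)
    (h5 : a ≠ f) (h6 : a ≠ g) (h7 : a ≠ h) (h8 : b ≠ c) (h9 : b ≠ d) (h10 : b ≠ e)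
    (h11 : b ≠ f) (h12 : b ≠ g) (h13 : b ≠ h) (h14 : c ≠ d) (h15 : c ≠ e) (h16 : c ≠ f)
    (h17 : c ≠ g) (h18 : c ≠ h) (h19 : d ≠ e) (h20 : d ≠ f) (h21 : d ≠ g) (h22 : d ≠ h)
    (h23 : e ≠ f) (h24 : e ≠ g) (h25 : e ≠ h) (h26 : f ≠ g) (h27 : f ≠ h) (h28 : g ≠ h) :
    [a, b, c, d, e, f, g, h].Pairwise (· ≠ ·) := by
  simp [List.pairwise_cons, *]

lemma mkF1 {u1 u2 v1 v2 : V} (hu : u1 ≠ u2) (hv : v1 ≠ v2)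
    (a11 : G.Adj u1 v1) (a12 : G.Adj u1 v2) (a21 : G.Adj u2 v1) (a22 : G.Adj u2 v2)
    (s11 : G.sign u1 v1 = false) (s12 : G.sign u1 v2 = false)
    (s21 : G.sign u2 v1 = false) (s22 : G.sign u2 v2 = false) : G.HasF1 := by
  have hsu : G.side u1 = G.side u2 := side_eq_of_adj_adj a11 a21
  have hsv : G.side v1 = G.side v2 := side_eq_of_adj_adj (adj_symm a11) (adj_symm a12)
  exact ⟨u1, u2, v1, v2,
    pairwise4 hu (ne_of_adj a11) (ne_of_adj a12) (ne_of_adj a21) (ne_of_adj a22) hv,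
    a11, a12, a21, a22, not_adj_of_side_eq hsu, not_adj_of_side_eq hsv,
    s11, s12, s21, s22⟩

lemma mkF2 {u1 u2 v1 v2 v3 : V} (hu : u1 ≠ u2) (hv12 : v1 ≠ v2) (hv13 : v1 ≠ v3)
    (hv23 : v2 ≠ v3)
    (a11 : G.Adj u1 v1) (a12 : G.Adj u1 v2) (a13 : G.Adj u1 v3)
    (a21 : G.Adj u2 v1) (a22 : G.Adj u2 v2) (a23 : G.Adj u2 v3)
    (s11 : G.sign u1 v1 = false) (s12 : G.sign u1 v2 = false)
    (s22 : G.sign u2 v2 = false) (s23 : G.sign u2 v3 = false) : G.HasF2 := by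
  have hsu : G.side u1 = G.side u2 := side_eq_of_adj_adj a11 a21
  have hsv2 : G.side v1 = G.side v2 := side_eq_of_adj_adj (adj_symm a11) (adj_symm a12)
  have hsv3 : G.side v1 = G.side v3 := side_eq_of_adj_adj (adj_symm a11) (adj_symm a13)
  exact ⟨u1, u2, v1, v2, v3,
    pairwise5 hu (ne_of_adj a11) (ne_of_adj a12) (ne_of_adj a13)
      (ne_of_adj a21) (ne_of_adj a22) (ne_of_adj a23) hv12 hv13 hv23,
    a11, a12, a13, a21, a22, a23,
    not_adj_of_side_eq hsu, not_adj_of_side_eq hsv2, not_adj_of_side_eq hsv3,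
    not_adj_of_side_eq (hsv2 ▸ hsv3), s11, s12, s22, s23⟩

lemma mkF3 {u1 u2 v1 v2 v3 v4 : V} (hu : u1 ≠ u2) (hv12 : v1 ≠ v2) (hv13 : v1 ≠ v3)
    (hv14 : v1 ≠ v4) (hv23 : v2 ≠ v3) (hv24 : v2 ≠ v4) (hv34 : v3 ≠ v4)
    (a11 : G.Adj u1 v1) (a12 : G.Adj u1 v2) (a13 : G.Adj u1 v3) (a14 : G.Adj u1 v4)
    (a21 : G.Adj u2 v1) (a22 : G.Adj u2 v2) (a23 : G.Adj u2 v3) (a24 : G.Adj u2 v4)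
    (s11 : G.sign u1 v1 = false) (s12 : G.sign u1 v2 = false)
    (s23 : G.sign u2 v3 = false) (s24 : G.sign u2 v4 = false) : G.HasF3 := by
  have hsu : G.side u1 = G.side u2 := side_eq_of_adj_adj a11 a21
  have hsv2 : G.side v1 = G.side v2 := side_eq_of_adj_adj (adj_symm a11) (adj_symm a12)
  have hsv3 : G.side v1 = G.side v3 := side_eq_of_adj_adj (adj_symm a11) (adj_symm a13)
  have hsv4 : G.side v1 = G.side v4 := side_eq_of_adj_adj (adj_symm a11) (adj_symm a14)
  exact ⟨u1, u2, v1, v2, v3, v4,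
    pairwise6 hu (ne_of_adj a11) (ne_of_adj a12) (ne_of_adj a13) (ne_of_adj a14)
      (ne_of_adj a21) (ne_of_adj a22) (ne_of_adj a23) (ne_of_adj a24)
      hv12 hv13 hv14 hv23 hv24 hv34,
    a11, a12, a13, a14, a21, a22, a23, a24,
    not_adj_of_side_eq hsu, not_adj_of_side_eq hsv2, not_adj_of_side_eq hsv3,
    not_adj_of_side_eq hsv4, not_adj_of_side_eq (hsv2 ▸ hsv3),
    not_adj_of_side_eq (hsv2 ▸ hsv4), not_adj_of_side_eq (hsv3 ▸ hsv4),
    s11, s12, s23, s24⟩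

lemma mkF4 {u1 u2 u3 v1 v2 v3 : V} (hu12 : u1 ≠ u2) (hu13 : u1 ≠ u3) (hu23 : u2 ≠ u3)
    (hv12 : v1 ≠ v2) (hv13 : v1 ≠ v3) (hv23 : v2 ≠ v3)
    (a11 : G.Adj u1 v1) (a12 : G.Adj u1 v2) (a13 : G.Adj u1 v3)
    (a21 : G.Adj u2 v1) (a22 : G.Adj u2 v2) (a23 : G.Adj u2 v3)
    (a31 : G.Adj u3 v1) (a32 : G.Adj u3 v2) (a33 : G.Adj u3 v3)
    (s11 : G.sign u1 v1 = false) (s22 : G.sign u2 v2 = false)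
    (s33 : G.sign u3 v3 = false) : G.HasF4 := by
  have hsu2 : G.side u1 = G.side u2 := side_eq_of_adj_adj a11 a21
  have hsu3 : G.side u1 = G.side u3 := side_eq_of_adj_adj a11 a31
  have hsv2 : G.side v1 = G.side v2 := side_eq_of_adj_adj (adj_symm a11) (adj_symm a12)
  have hsv3 : G.side v1 = G.side v3 := side_eq_of_adj_adj (adj_symm a11) (adj_symm a13)
  exact ⟨u1, u2, u3, v1, v2, v3,
    pairwise6 hu12 hu13 (ne_of_adj a11) (ne_of_adj a12) (ne_of_adj a13) hu23
      (ne_of_adj a21) (ne_of_adj a22) (ne_of_adj a23)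
      (ne_of_adj a31) (ne_of_adj a32) (ne_of_adj a33) hv12 hv13 hv23,
    a11, a12, a13, a21, a22, a23, a31, a32, a33,
    not_adj_of_side_eq hsu2, not_adj_of_side_eq hsu3, not_adj_of_side_eq (hsu2 ▸ hsu3),
    not_adj_of_side_eq hsv2, not_adj_of_side_eq hsv3, not_adj_of_side_eq (hsv2 ▸ hsv3),
    s11, s22, s33⟩

lemma mkF5 {x1 x2 x3 y1 y2 y3 : V} (hx12 : x1 ≠ x2) (hx13 : x1 ≠ x3) (hx23 : x2 ≠ x3)
    (hy12 : y1 ≠ y2) (hy13 : y1 ≠ y3) (hy23 : y2 ≠ y3)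
    (a11 : G.Adj x1 y1) (a12 : G.Adj x1 y2) (n13 : ¬ G.Adj x1 y3)
    (a21 : G.Adj x2 y1) (a22 : G.Adj x2 y2) (a23 : G.Adj x2 y3)
    (a31 : G.Adj x3 y1) (a32 : G.Adj x3 y2) (a33 : G.Adj x3 y3)
    (s21 : G.sign x2 y1 = false) (s32 : G.sign x3 y2 = false) : G.HasF5 := by
  have hsx2 : G.side x1 = G.side x2 := side_eq_of_adj_adj a11 a21
  have hsx3 : G.side x1 = G.side x3 := side_eq_of_adj_adj a11 a31
  have hsy2 : G.side y1 = G.side y2 := side_eq_of_adj_adj (adj_symm a11) (adj_symm a12)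
  have hsy3 : G.side y1 = G.side y3 := side_eq_of_adj_adj (adj_symm a21) (adj_symm a23)
  have hx1y3 : x1 ≠ y3 := ne_of_side_ne (G := G) (by rw [← hsy3]; exact G.bipartite a11)
  exact ⟨x1, x2, x3, y1, y2, y3,
    pairwise6 hx12 hx13 (ne_of_adj a11) (ne_of_adj a12) hx1y3 hx23
      (ne_of_adj a21) (ne_of_adj a22) (ne_of_adj a23)
      (ne_of_adj a31) (ne_of_adj a32) (ne_of_adj a33) hy12 hy13 hy23,
    a11, a12, n13, a21, a22, a23, a31, a32, a33,
    not_adj_of_side_eq hsx2, not_adj_of_side_eq hsx3, not_adj_of_side_eq (hsx2 ▸ hsx3),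
    not_adj_of_side_eq hsy2, not_adj_of_side_eq hsy3, not_adj_of_side_eq (hsy2 ▸ hsy3),
    s21, s32⟩

lemma mkF6 {x1 x2 x3 x4 y1 y2 y3 y4 : V}
    (hx12 : x1 ≠ x2) (hx34 : x3 ≠ x4) (hy12 : y1 ≠ y2) (hy34 : y3 ≠ y4)
    (hA1 : x1 ≠ x3) (hA2 : x1 ≠ x4) (hA3 : x2 ≠ x3) (hA4 : x2 ≠ x4)
    (hB1 : y1 ≠ y3) (hB2 : y1 ≠ y4) (hB3 : y2 ≠ y3) (hB4 : y2 ≠ y4)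
    (a11 : G.Adj x1 y1) (a12 : G.Adj x1 y2) (n13 : ¬ G.Adj x1 y3) (n14 : ¬ G.Adj x1 y4)
    (a21 : G.Adj x2 y1) (a22 : G.Adj x2 y2) (n23 : ¬ G.Adj x2 y3) (n24 : ¬ G.Adj x2 y4)
    (a31 : G.Adj x3 y1) (a32 : G.Adj x3 y2) (a33 : G.Adj x3 y3) (a34 : G.Adj x3 y4)
    (a41 : G.Adj x4 y1) (a42 : G.Adj x4 y2) (a43 : G.Adj x4 y3) (a44 : G.Adj x4 y4)
    (s11 : G.sign x1 y1 = false) (s21 : G.sign x2 y1 = false)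
    (s32 : G.sign x3 y2 = false) (s43 : G.sign x4 y3 = false)
    (s44 : G.sign x4 y4 = false) : G.HasF6 := by
  have hsx2 : G.side x1 = G.side x2 := side_eq_of_adj_adj a11 a21
  have hsx3 : G.side x1 = G.side x3 := side_eq_of_adj_adj a11 a31
  have hsx4 : G.side x1 = G.side x4 := side_eq_of_adj_adj a11 a41
  have hsy2 : G.side y1 = G.side y2 := side_eq_of_adj_adj (adj_symm a11) (adj_symm a12)
  have hsy3 : G.side y1 = G.side y3 := side_eq_of_adj_adj (adj_symm a31) (adj_symm a33)
  have hsy4 : G.side y1 = G.side y4 := side_eq_of_adj_adj (adj_symm a31) (adj_symm a34)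
  have hsxy : G.side x1 ≠ G.side y1 := G.bipartite a11
  have hne : ∀ {x y : V}, G.side x1 = G.side x → G.side y1 = G.side y → x ≠ y := by
    intro x y hx hy
    exact ne_of_side_ne (G := G) (by rw [← hx, ← hy]; exact hsxy)
  exact ⟨x1, x2, x3, x4, y1, y2, y3, y4,
    pairwise8 hx12 hA1 hA2 (hne rfl rfl) (hne rfl hsy2) (hne rfl hsy3) (hne rfl hsy4)
      hA3 hA4 (hne hsx2 rfl) (hne hsx2 hsy2) (hne hsx2 hsy3) (hne hsx2 hsy4)
      hx34 (hne hsx3 rfl) (hne hsx3 hsy2) (hne hsx3 hsy3) (hne hsx3 hsy4)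
      (hne hsx4 rfl) (hne hsx4 hsy2) (hne hsx4 hsy3) (hne hsx4 hsy4)
      hy12 hB1 hB2 hB3 hB4 hy34,
    a11, a12, n13, n14, a21, a22, n23, n24, a31, a32, a33, a34, a41, a42, a43, a44,
    not_adj_of_side_eq hsx2, not_adj_of_side_eq hsx3, not_adj_of_side_eq hsx4,
    not_adj_of_side_eq (hsx2 ▸ hsx3), not_adj_of_side_eq (hsx2 ▸ hsx4),
    not_adj_of_side_eq (hsx3 ▸ hsx4),
    not_adj_of_side_eq hsy2, not_adj_of_side_eq hsy3, not_adj_of_side_eq hsy4,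
    not_adj_of_side_eq (hsy2 ▸ hsy3), not_adj_of_side_eq (hsy2 ▸ hsy4),
    not_adj_of_side_eq (hsy3 ▸ hsy4),
    s11, s21, s32, s43, s44⟩

end mk

end SignedBigraph
namespace SignedBigraph

variable {V : Type u}

lemma adj_del {G : SignedBigraph V} {s : Set (Sym2 V)} {a b : V} :
    (G.deleteEdges s).Adj a b ↔ G.Adj a b ∧ s(a, b) ∉ s :=
  SimpleGraph.deleteEdges_adj

lemma sign_del (G : SignedBigraph V) (s : Set (Sym2 V)) : (G.deleteEdges s).sign = G.sign := rfl

lemma side_del (G : SignedBigraph V) (s : Set (Sym2 V)) : (G.deleteEdges s).side = G.side := rfl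

lemma Ns_del_subset (G : SignedBigraph V) (s : Set (Sym2 V)) (a : V) :
    (G.deleteEdges s).Ns a ⊆ G.Ns a := fun _ h => (adj_del.mp h).1

lemma SB_ext {H K : SignedBigraph V} (hg : H.graph = K.graph) (hs : H.sign = K.sign)
    (hd : H.side = K.side) : H = K := by
  cases H; cases K
  simp only at hg hs hd
  subst hg; subst hs; subst hd
  rfl

lemma deleteEdges_empty' (G : SignedBigraph V) : G.deleteEdges ∅ = G :=
  SB_ext (SimpleGraph.deleteEdges_empty) rfl rfl

lemma deleteEdges_deleteEdges' (G : SignedBigraph V) (s t : Set (Sym2 V)) :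
    (G.deleteEdges s).deleteEdges t = G.deleteEdges (s ∪ t) := by
  refine SB_ext ?_ rfl rfl
  show (G.graph.deleteEdges s).deleteEdges t = G.graph.deleteEdges (s ∪ t)
  ext a b
  simp only [SimpleGraph.deleteEdges_adj, Set.mem_union]
  tauto

lemma edgeNbhd_comm (G : SignedBigraph V) (a b : V) : G.edgeNbhd a b = G.edgeNbhd b a := by
  unfold edgeNbhd
  rw [Set.union_comm, Set.pair_comm]

lemma signedSimplicial_symm {G : SignedBigraph V} {a b : V} (h : G.SignedSimplicial a b) :
    G.SignedSimplicial b a := by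
  refine ⟨h.1.symm, ?_⟩
  rw [edgeNbhd_comm]
  exact h.2

lemma ss_of_eq {G' : SignedBigraph V} {a b p q : V} (hss : G'.SignedSimplicial a b)
    (h : s(a, b) = s(p, q)) : G'.SignedSimplicial p q := by
  rcases Sym2.eq_iff.mp h with ⟨rfl, rfl⟩ | ⟨rfl, rfl⟩
  · exact hss
  · exact signedSimplicial_symm hss

lemma simplicial_contra {G' : SignedBigraph V} {a b c d : V}
    (hss : G'.SignedSimplicial a b)
    (hc : G'.Adj a c ∨ G'.Adj b c) (hca : c ≠ a) (hcb : c ≠ b)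
    (hd : G'.Adj a d ∨ G'.Adj b d) (hda : d ≠ a) (hdb : d ≠ b)
    (hside : G'.side c ≠ G'.side d) :
    G'.Adj c d ∧ G'.sign c d = true := by
  have hcmem : c ∈ G'.edgeNbhd a b := by
    refine ⟨?_, ?_⟩
    · rcases hc with h | h
      · exact Or.inl h
      · exact Or.inr h
    · simp only [Set.mem_insert_iff, Set.mem_singleton_iff]
      push_neg
      exact ⟨hca, hcb⟩
  have hdmem : d ∈ G'.edgeNbhd a b := by
    refine ⟨?_, ?_⟩
    · rcases hd with h | h
      · exact Or.inl h
      · exact Or.inr h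
    · simp only [Set.mem_insert_iff, Set.mem_singleton_iff]
      push_neg
      exact ⟨hda, hdb⟩
  exact hss.2 c hcmem d hdmem hside

lemma exists_min_pattern_step {G : SignedBigraph V} (hC : G.IsChordal)
    (P : List (Sym2 V)) (hP : ∀ e ∈ P, e ∈ G.graph.edgeSet)
    (e₀ : Sym2 V) (he₀ : e₀ ∈ P) :
    ∃ (s : Set (Sym2 V)) (a b : V),
      s(a, b) ∈ P ∧ (∀ e ∈ P, e ∉ s) ∧ (G.deleteEdges s).SignedSimplicial a b := by
  obtain ⟨l, hnd, hmem, hstep⟩ := hC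
  classical
  have hex : ∃ i : ℕ, ∃ h : i < l.length, l.get ⟨i, h⟩ ∈ P := by
    have : e₀ ∈ l := (hmem e₀).mp (hP e₀ he₀)
    obtain ⟨⟨i, hi⟩, hgi⟩ := List.mem_iff_get.mp this
    exact ⟨i, hi, by rw [hgi]; exact he₀⟩
  let i₀ := Nat.find hex
  obtain ⟨hlen, hPmem⟩ : ∃ h : i₀ < l.length, l.get ⟨i₀, h⟩ ∈ P := Nat.find_spec hex
  obtain ⟨a, b, hab, hss⟩ := hstep i₀ hlen
  refine ⟨{e | e ∈ l.take i₀}, a, b, by rw [← hab]; exact hPmem, ?_, hss⟩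
  intro e heP hetake
  simp only [Set.mem_setOf_eq] at hetake
  obtain ⟨⟨j, hj⟩, hgj⟩ := List.mem_iff_get.mp hetake
  have hjlen : j < l.length := lt_of_lt_of_le hj (by
    rw [List.length_take] at hj ⊢
    omega)
  have hjlt : j < i₀ := by
    have := hj
    rw [List.length_take] at this
    omega
  have : l.get ⟨j, hjlen⟩ = e := by
    rw [← hgj]
    simp [List.getElem_take]
  exact Nat.find_min hex hjlt ⟨hjlen, by rw [this]; exact heP⟩

end SignedBigraph
namespace SignedBigraph

variable {V : Type u}

lemma step_neg {G : SignedBigraph V} {s : Set (Sym2 V)} {a b c d : V}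
    (hss : (G.deleteEdges s).SignedSimplicial a b)
    (hc : (G.deleteEdges s).Adj a c ∨ (G.deleteEdges s).Adj b c) (hca : c ≠ a) (hcb : c ≠ b)
    (hd : (G.deleteEdges s).Adj a d ∨ (G.deleteEdges s).Adj b d) (hda : d ≠ a) (hdb : d ≠ b)
    (hside : G.side c ≠ G.side d) (hneg : G.sign c d = false) : False := by
  have W := simplicial_contra hss hc hca hcb hd hda hdb hside
  have h2 : G.sign c d = true := W.2
  rw [hneg] at h2
  exact Bool.noConfusion h2

lemma step_nonadj {G : SignedBigraph V} {s : Set (Sym2 V)} {a b c d : V}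
    (hss : (G.deleteEdges s).SignedSimplicial a b)
    (hc : (G.deleteEdges s).Adj a c ∨ (G.deleteEdges s).Adj b c) (hca : c ≠ a) (hcb : c ≠ b)
    (hd : (G.deleteEdges s).Adj a d ∨ (G.deleteEdges s).Adj b d) (hda : d ≠ a) (hdb : d ≠ b)
    (hside : G.side c ≠ G.side d) (hnadj : ¬ G.Adj c d) : False := by
  have W := simplicial_contra hss hc hca hcb hd hda hdb hside
  exact hnadj (adj_del.mp W.1).1

lemma chordal_no_F1 {G : SignedBigraph V} (hC : G.IsChordal) : ¬ G.HasF1 := by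
  rintro ⟨u1, u2, v1, v2, hpw, a11, a12, a21, a22, nuu, nvv, s11, s12, s21, s22⟩
  simp only [List.pairwise_cons, List.mem_cons, List.not_mem_nil, or_false, List.mem_singleton,
    forall_eq_or_imp, forall_eq, false_implies, implies_true, and_true, List.Pairwise.nil] at hpw
  obtain ⟨⟨q12, q13, q14⟩, ⟨q23, q24⟩, q34⟩ := hpw
  obtain ⟨s, a, b, hmem, hnotin, hss⟩ := exists_min_pattern_step hC
    [s(u1, v1), s(u1, v2), s(u2, v1), s(u2, v2)]
    (by
      intro e he
      simp only [List.mem_cons, List.not_mem_nil, or_false] at he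
      rcases he with rfl|rfl|rfl|rfl
      · exact (SimpleGraph.mem_edgeSet G.graph).mpr a11
      · exact (SimpleGraph.mem_edgeSet G.graph).mpr a12
      · exact (SimpleGraph.mem_edgeSet G.graph).mpr a21
      · exact (SimpleGraph.mem_edgeSet G.graph).mpr a22
      )
    _ List.mem_cons_self
  have A11 : (G.deleteEdges s).Adj u1 v1 := adj_del.mpr ⟨a11, hnotin _ (by simp)⟩
  have A12 : (G.deleteEdges s).Adj u1 v2 := adj_del.mpr ⟨a12, hnotin _ (by simp)⟩
  have A21 : (G.deleteEdges s).Adj u2 v1 := adj_del.mpr ⟨a21, hnotin _ (by simp)⟩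
  have A22 : (G.deleteEdges s).Adj u2 v2 := adj_del.mpr ⟨a22, hnotin _ (by simp)⟩
  simp only [List.mem_cons, List.not_mem_nil, or_false] at hmem
  rcases hmem with h|h|h|h
  · exact step_neg (ss_of_eq hss h) (Or.inl A12) (ne_of_adj a12).symm q34.symm
      (Or.inr (adj_symm A21)) q12.symm (ne_of_adj a21) (G.bipartite (adj_symm a22)) (by rw [G.sign_symm]; exact s22)
  · exact step_neg (ss_of_eq hss h) (Or.inl A11) (ne_of_adj a11).symm q34
      (Or.inr (adj_symm A22)) q12.symm (ne_of_adj a22) (G.bipartite (adj_symm a21)) (by rw [G.sign_symm]; exact s21)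
  · exact step_neg (ss_of_eq hss h) (Or.inl A22) (ne_of_adj a22).symm q34.symm
      (Or.inr (adj_symm A11)) q12 (ne_of_adj a11) (G.bipartite (adj_symm a12)) (by rw [G.sign_symm]; exact s12)
  · exact step_neg (ss_of_eq hss h) (Or.inl A21) (ne_of_adj a21).symm q34
      (Or.inr (adj_symm A12)) q12 (ne_of_adj a12) (G.bipartite (adj_symm a11)) (by rw [G.sign_symm]; exact s11)

lemma chordal_no_F2 {G : SignedBigraph V} (hC : G.IsChordal) : ¬ G.HasF2 := by
  rintro ⟨u1, u2, v1, v2, v3, hpw, a11, a12, a13, a21, a22, a23, n1, n2, n3, n4, s11, s12, s22, s23⟩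
  simp only [List.pairwise_cons, List.mem_cons, List.not_mem_nil, or_false, List.mem_singleton,
    forall_eq_or_imp, forall_eq, false_implies, implies_true, and_true, List.Pairwise.nil] at hpw
  obtain ⟨⟨q12, q13, q14, q15⟩, ⟨q23, q24, q25⟩, ⟨q34, q35⟩, q45⟩ := hpw
  obtain ⟨s, a, b, hmem, hnotin, hss⟩ := exists_min_pattern_step hC
    [s(u1, v1), s(u1, v2), s(u1, v3), s(u2, v1), s(u2, v2), s(u2, v3)]
    (by
      intro e he
      simp only [List.mem_cons, List.not_mem_nil, or_false] at he
      rcases he with rfl|rfl|rfl|rfl|rfl|rfl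
      · exact (SimpleGraph.mem_edgeSet G.graph).mpr a11
      · exact (SimpleGraph.mem_edgeSet G.graph).mpr a12
      · exact (SimpleGraph.mem_edgeSet G.graph).mpr a13
      · exact (SimpleGraph.mem_edgeSet G.graph).mpr a21
      · exact (SimpleGraph.mem_edgeSet G.graph).mpr a22
      · exact (SimpleGraph.mem_edgeSet G.graph).mpr a23
      )
    _ List.mem_cons_self
  have A11 : (G.deleteEdges s).Adj u1 v1 := adj_del.mpr ⟨a11, hnotin _ (by simp)⟩
  have A12 : (G.deleteEdges s).Adj u1 v2 := adj_del.mpr ⟨a12, hnotin _ (by simp)⟩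
  have A13 : (G.deleteEdges s).Adj u1 v3 := adj_del.mpr ⟨a13, hnotin _ (by simp)⟩
  have A21 : (G.deleteEdges s).Adj u2 v1 := adj_del.mpr ⟨a21, hnotin _ (by simp)⟩
  have A22 : (G.deleteEdges s).Adj u2 v2 := adj_del.mpr ⟨a22, hnotin _ (by simp)⟩
  have A23 : (G.deleteEdges s).Adj u2 v3 := adj_del.mpr ⟨a23, hnotin _ (by simp)⟩
  simp only [List.mem_cons, List.not_mem_nil, or_false] at hmem
  rcases hmem with h|h|h|h|h|h
  · exact step_neg (ss_of_eq hss h) (Or.inl A12) (ne_of_adj a12).symm q34.symm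
      (Or.inr (adj_symm A21)) q12.symm (ne_of_adj a21) (G.bipartite (adj_symm a22)) (by rw [G.sign_symm]; exact s22)
  · exact step_neg (ss_of_eq hss h) (Or.inl A13) (ne_of_adj a13).symm q45.symm
      (Or.inr (adj_symm A22)) q12.symm (ne_of_adj a22) (G.bipartite (adj_symm a23)) (by rw [G.sign_symm]; exact s23)
  · exact step_neg (ss_of_eq hss h) (Or.inl A12) (ne_of_adj a12).symm q45
      (Or.inr (adj_symm A23)) q12.symm (ne_of_adj a23) (G.bipartite (adj_symm a22)) (by rw [G.sign_symm]; exact s22)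
  · exact step_neg (ss_of_eq hss h) (Or.inl A22) (ne_of_adj a22).symm q34.symm
      (Or.inr (adj_symm A11)) q12 (ne_of_adj a11) (G.bipartite (adj_symm a12)) (by rw [G.sign_symm]; exact s12)
  · exact step_neg (ss_of_eq hss h) (Or.inl A21) (ne_of_adj a21).symm q34
      (Or.inr (adj_symm A12)) q12 (ne_of_adj a12) (G.bipartite (adj_symm a11)) (by rw [G.sign_symm]; exact s11)
  · exact step_neg (ss_of_eq hss h) (Or.inl A22) (ne_of_adj a22).symm q45
      (Or.inr (adj_symm A13)) q12 (ne_of_adj a13) (G.bipartite (adj_symm a12)) (by rw [G.sign_symm]; exact s12)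

lemma chordal_no_F3 {G : SignedBigraph V} (hC : G.IsChordal) : ¬ G.HasF3 := by
  rintro ⟨u1, u2, v1, v2, v3, v4, hpw, a11, a12, a13, a14, a21, a22, a23, a24, n1, n2, n3, n4, n5, n6, n7, s11, s12, s23, s24⟩
  simp only [List.pairwise_cons, List.mem_cons, List.not_mem_nil, or_false, List.mem_singleton,
    forall_eq_or_imp, forall_eq, false_implies, implies_true, and_true, List.Pairwise.nil] at hpw
  obtain ⟨⟨q12, q13, q14, q15, q16⟩, ⟨q23, q24, q25, q26⟩, ⟨q34, q35, q36⟩, ⟨q45, q46⟩, q56⟩ := hpw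
  obtain ⟨s, a, b, hmem, hnotin, hss⟩ := exists_min_pattern_step hC
    [s(u1, v1), s(u1, v2), s(u1, v3), s(u1, v4), s(u2, v1), s(u2, v2), s(u2, v3), s(u2, v4)]
    (by
      intro e he
      simp only [List.mem_cons, List.not_mem_nil, or_false] at he
      rcases he with rfl|rfl|rfl|rfl|rfl|rfl|rfl|rfl
      · exact (SimpleGraph.mem_edgeSet G.graph).mpr a11
      · exact (SimpleGraph.mem_edgeSet G.graph).mpr a12
      · exact (SimpleGraph.mem_edgeSet G.graph).mpr a13
      · exact (SimpleGraph.mem_edgeSet G.graph).mpr a14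
      · exact (SimpleGraph.mem_edgeSet G.graph).mpr a21
      · exact (SimpleGraph.mem_edgeSet G.graph).mpr a22
      · exact (SimpleGraph.mem_edgeSet G.graph).mpr a23
      · exact (SimpleGraph.mem_edgeSet G.graph).mpr a24
      )
    _ List.mem_cons_self
  have A11 : (G.deleteEdges s).Adj u1 v1 := adj_del.mpr ⟨a11, hnotin _ (by simp)⟩
  have A12 : (G.deleteEdges s).Adj u1 v2 := adj_del.mpr ⟨a12, hnotin _ (by simp)⟩
  have A13 : (G.deleteEdges s).Adj u1 v3 := adj_del.mpr ⟨a13, hnotin _ (by simp)⟩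
  have A14 : (G.deleteEdges s).Adj u1 v4 := adj_del.mpr ⟨a14, hnotin _ (by simp)⟩
  have A21 : (G.deleteEdges s).Adj u2 v1 := adj_del.mpr ⟨a21, hnotin _ (by simp)⟩
  have A22 : (G.deleteEdges s).Adj u2 v2 := adj_del.mpr ⟨a22, hnotin _ (by simp)⟩
  have A23 : (G.deleteEdges s).Adj u2 v3 := adj_del.mpr ⟨a23, hnotin _ (by simp)⟩
  have A24 : (G.deleteEdges s).Adj u2 v4 := adj_del.mpr ⟨a24, hnotin _ (by simp)⟩
  simp only [List.mem_cons, List.not_mem_nil, or_false] at hmem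
  rcases hmem with h|h|h|h|h|h|h|h
  · exact step_neg (ss_of_eq hss h) (Or.inl A13) (ne_of_adj a13).symm q35.symm
      (Or.inr (adj_symm A21)) q12.symm (ne_of_adj a21) (G.bipartite (adj_symm a23)) (by rw [G.sign_symm]; exact s23)
  · exact step_neg (ss_of_eq hss h) (Or.inl A13) (ne_of_adj a13).symm q45.symm
      (Or.inr (adj_symm A22)) q12.symm (ne_of_adj a22) (G.bipartite (adj_symm a23)) (by rw [G.sign_symm]; exact s23)
  · exact step_neg (ss_of_eq hss h) (Or.inl A14) (ne_of_adj a14).symm q56.symm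
      (Or.inr (adj_symm A23)) q12.symm (ne_of_adj a23) (G.bipartite (adj_symm a24)) (by rw [G.sign_symm]; exact s24)
  · exact step_neg (ss_of_eq hss h) (Or.inl A13) (ne_of_adj a13).symm q56
      (Or.inr (adj_symm A24)) q12.symm (ne_of_adj a24) (G.bipartite (adj_symm a23)) (by rw [G.sign_symm]; exact s23)
  · exact step_neg (ss_of_eq hss h) (Or.inl A22) (ne_of_adj a22).symm q34.symm
      (Or.inr (adj_symm A11)) q12 (ne_of_adj a11) (G.bipartite (adj_symm a12)) (by rw [G.sign_symm]; exact s12)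
  · exact step_neg (ss_of_eq hss h) (Or.inl A21) (ne_of_adj a21).symm q34
      (Or.inr (adj_symm A12)) q12 (ne_of_adj a12) (G.bipartite (adj_symm a11)) (by rw [G.sign_symm]; exact s11)
  · exact step_neg (ss_of_eq hss h) (Or.inl A21) (ne_of_adj a21).symm q35
      (Or.inr (adj_symm A13)) q12 (ne_of_adj a13) (G.bipartite (adj_symm a11)) (by rw [G.sign_symm]; exact s11)
  · exact step_neg (ss_of_eq hss h) (Or.inl A21) (ne_of_adj a21).symm q36
      (Or.inr (adj_symm A14)) q12 (ne_of_adj a14) (G.bipartite (adj_symm a11)) (by rw [G.sign_symm]; exact s11)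

lemma chordal_no_F4 {G : SignedBigraph V} (hC : G.IsChordal) : ¬ G.HasF4 := by
  rintro ⟨u1, u2, u3, v1, v2, v3, hpw, a11, a12, a13, a21, a22, a23, a31, a32, a33, n1, n2, n3, n4, n5, n6, s11, s22, s33⟩
  simp only [List.pairwise_cons, List.mem_cons, List.not_mem_nil, or_false, List.mem_singleton,
    forall_eq_or_imp, forall_eq, false_implies, implies_true, and_true, List.Pairwise.nil] at hpw
  obtain ⟨⟨q12, q13, q14, q15, q16⟩, ⟨q23, q24, q25, q26⟩, ⟨q34, q35, q36⟩, ⟨q45, q46⟩, q56⟩ := hpw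
  obtain ⟨s, a, b, hmem, hnotin, hss⟩ := exists_min_pattern_step hC
    [s(u1, v1), s(u1, v2), s(u1, v3), s(u2, v1), s(u2, v2), s(u2, v3), s(u3, v1), s(u3, v2), s(u3, v3)]
    (by
      intro e he
      simp only [List.mem_cons, List.not_mem_nil, or_false] at he
      rcases he with rfl|rfl|rfl|rfl|rfl|rfl|rfl|rfl|rfl
      · exact (SimpleGraph.mem_edgeSet G.graph).mpr a11
      · exact (SimpleGraph.mem_edgeSet G.graph).mpr a12
      · exact (SimpleGraph.mem_edgeSet G.graph).mpr a13
      · exact (SimpleGraph.mem_edgeSet G.graph).mpr a21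
      · exact (SimpleGraph.mem_edgeSet G.graph).mpr a22
      · exact (SimpleGraph.mem_edgeSet G.graph).mpr a23
      · exact (SimpleGraph.mem_edgeSet G.graph).mpr a31
      · exact (SimpleGraph.mem_edgeSet G.graph).mpr a32
      · exact (SimpleGraph.mem_edgeSet G.graph).mpr a33
      )
    _ List.mem_cons_self
  have A11 : (G.deleteEdges s).Adj u1 v1 := adj_del.mpr ⟨a11, hnotin _ (by simp)⟩
  have A12 : (G.deleteEdges s).Adj u1 v2 := adj_del.mpr ⟨a12, hnotin _ (by simp)⟩
  have A13 : (G.deleteEdges s).Adj u1 v3 := adj_del.mpr ⟨a13, hnotin _ (by simp)⟩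
  have A21 : (G.deleteEdges s).Adj u2 v1 := adj_del.mpr ⟨a21, hnotin _ (by simp)⟩
  have A22 : (G.deleteEdges s).Adj u2 v2 := adj_del.mpr ⟨a22, hnotin _ (by simp)⟩
  have A23 : (G.deleteEdges s).Adj u2 v3 := adj_del.mpr ⟨a23, hnotin _ (by simp)⟩
  have A31 : (G.deleteEdges s).Adj u3 v1 := adj_del.mpr ⟨a31, hnotin _ (by simp)⟩
  have A32 : (G.deleteEdges s).Adj u3 v2 := adj_del.mpr ⟨a32, hnotin _ (by simp)⟩
  have A33 : (G.deleteEdges s).Adj u3 v3 := adj_del.mpr ⟨a33, hnotin _ (by simp)⟩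
  simp only [List.mem_cons, List.not_mem_nil, or_false] at hmem
  rcases hmem with h|h|h|h|h|h|h|h|h
  · exact step_neg (ss_of_eq hss h) (Or.inl A12) (ne_of_adj a12).symm q45.symm
      (Or.inr (adj_symm A21)) q12.symm (ne_of_adj a21) (G.bipartite (adj_symm a22)) (by rw [G.sign_symm]; exact s22)
  · exact step_neg (ss_of_eq hss h) (Or.inl A13) (ne_of_adj a13).symm q56.symm
      (Or.inr (adj_symm A32)) q13.symm (ne_of_adj a32) (G.bipartite (adj_symm a33)) (by rw [G.sign_symm]; exact s33)
  · exact step_neg (ss_of_eq hss h) (Or.inl A12) (ne_of_adj a12).symm q56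
      (Or.inr (adj_symm A23)) q12.symm (ne_of_adj a23) (G.bipartite (adj_symm a22)) (by rw [G.sign_symm]; exact s22)
  · exact step_neg (ss_of_eq hss h) (Or.inl A23) (ne_of_adj a23).symm q46.symm
      (Or.inr (adj_symm A31)) q23.symm (ne_of_adj a31) (G.bipartite (adj_symm a33)) (by rw [G.sign_symm]; exact s33)
  · exact step_neg (ss_of_eq hss h) (Or.inl A21) (ne_of_adj a21).symm q45
      (Or.inr (adj_symm A12)) q12 (ne_of_adj a12) (G.bipartite (adj_symm a11)) (by rw [G.sign_symm]; exact s11)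
  · exact step_neg (ss_of_eq hss h) (Or.inl A21) (ne_of_adj a21).symm q46
      (Or.inr (adj_symm A13)) q12 (ne_of_adj a13) (G.bipartite (adj_symm a11)) (by rw [G.sign_symm]; exact s11)
  · exact step_neg (ss_of_eq hss h) (Or.inl A32) (ne_of_adj a32).symm q45.symm
      (Or.inr (adj_symm A21)) q23 (ne_of_adj a21) (G.bipartite (adj_symm a22)) (by rw [G.sign_symm]; exact s22)
  · exact step_neg (ss_of_eq hss h) (Or.inl A31) (ne_of_adj a31).symm q45
      (Or.inr (adj_symm A12)) q13 (ne_of_adj a12) (G.bipartite (adj_symm a11)) (by rw [G.sign_symm]; exact s11)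
  · exact step_neg (ss_of_eq hss h) (Or.inl A31) (ne_of_adj a31).symm q46
      (Or.inr (adj_symm A13)) q13 (ne_of_adj a13) (G.bipartite (adj_symm a11)) (by rw [G.sign_symm]; exact s11)

lemma chordal_no_F5 {G : SignedBigraph V} (hC : G.IsChordal) : ¬ G.HasF5 := by
  rintro ⟨x1, x2, x3, y1, y2, y3, hpw, a11, a12, n13, a21, a22, a23, a31, a32, a33, m1, m2, m3, m4, m5, m6, s21, s32⟩
  simp only [List.pairwise_cons, List.mem_cons, List.not_mem_nil, or_false, List.mem_singleton,
    forall_eq_or_imp, forall_eq, false_implies, implies_true, and_true, List.Pairwise.nil] at hpw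
  obtain ⟨⟨q12, q13, q14, q15, q16⟩, ⟨q23, q24, q25, q26⟩, ⟨q34, q35, q36⟩, ⟨q45, q46⟩, q56⟩ := hpw
  obtain ⟨s, a, b, hmem, hnotin, hss⟩ := exists_min_pattern_step hC
    [s(x1, y1), s(x1, y2), s(x2, y1), s(x2, y2), s(x2, y3), s(x3, y1), s(x3, y2), s(x3, y3)]
    (by
      intro e he
      simp only [List.mem_cons, List.not_mem_nil, or_false] at he
      rcases he with rfl|rfl|rfl|rfl|rfl|rfl|rfl|rfl
      · exact (SimpleGraph.mem_edgeSet G.graph).mpr a11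
      · exact (SimpleGraph.mem_edgeSet G.graph).mpr a12
      · exact (SimpleGraph.mem_edgeSet G.graph).mpr a21
      · exact (SimpleGraph.mem_edgeSet G.graph).mpr a22
      · exact (SimpleGraph.mem_edgeSet G.graph).mpr a23
      · exact (SimpleGraph.mem_edgeSet G.graph).mpr a31
      · exact (SimpleGraph.mem_edgeSet G.graph).mpr a32
      · exact (SimpleGraph.mem_edgeSet G.graph).mpr a33
      )
    _ List.mem_cons_self
  have A11 : (G.deleteEdges s).Adj x1 y1 := adj_del.mpr ⟨a11, hnotin _ (by simp)⟩
  have A12 : (G.deleteEdges s).Adj x1 y2 := adj_del.mpr ⟨a12, hnotin _ (by simp)⟩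
  have A21 : (G.deleteEdges s).Adj x2 y1 := adj_del.mpr ⟨a21, hnotin _ (by simp)⟩
  have A22 : (G.deleteEdges s).Adj x2 y2 := adj_del.mpr ⟨a22, hnotin _ (by simp)⟩
  have A23 : (G.deleteEdges s).Adj x2 y3 := adj_del.mpr ⟨a23, hnotin _ (by simp)⟩
  have A31 : (G.deleteEdges s).Adj x3 y1 := adj_del.mpr ⟨a31, hnotin _ (by simp)⟩
  have A32 : (G.deleteEdges s).Adj x3 y2 := adj_del.mpr ⟨a32, hnotin _ (by simp)⟩
  have A33 : (G.deleteEdges s).Adj x3 y3 := adj_del.mpr ⟨a33, hnotin _ (by simp)⟩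
  have sxy : G.side y3 ≠ G.side x1 := by
    rw [show G.side x1 = G.side x2 from side_eq_of_adj_adj a11 a21]
    exact (G.bipartite (adj_symm a23))
  simp only [List.mem_cons, List.not_mem_nil, or_false] at hmem
  rcases hmem with h|h|h|h|h|h|h|h
  · exact step_neg (ss_of_eq hss h) (Or.inl A12) (ne_of_adj a12).symm q45.symm
      (Or.inr (adj_symm A31)) q13.symm (ne_of_adj a31) (G.bipartite (adj_symm a32)) (by rw [G.sign_symm]; exact s32)
  · exact step_neg (ss_of_eq hss h) (Or.inl A11) (ne_of_adj a11).symm q45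
      (Or.inr (adj_symm A22)) q12.symm (ne_of_adj a22) (G.bipartite (adj_symm a21)) (by rw [G.sign_symm]; exact s21)
  · exact step_nonadj (ss_of_eq hss h) (Or.inl A23) (ne_of_adj a23).symm q46.symm
      (Or.inr (adj_symm A11)) q12 (ne_of_adj a11) sxy (fun hh => n13 (adj_symm hh))
  · exact step_nonadj (ss_of_eq hss h) (Or.inl A23) (ne_of_adj a23).symm q56.symm
      (Or.inr (adj_symm A12)) q12 (ne_of_adj a12) sxy (fun hh => n13 (adj_symm hh))
  · exact step_neg (ss_of_eq hss h) (Or.inl A22) (ne_of_adj a22).symm q56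
      (Or.inr (adj_symm A33)) q23.symm (ne_of_adj a33) (G.bipartite (adj_symm a32)) (by rw [G.sign_symm]; exact s32)
  · exact step_nonadj (ss_of_eq hss h) (Or.inl A33) (ne_of_adj a33).symm q46.symm
      (Or.inr (adj_symm A11)) q13 (ne_of_adj a11) sxy (fun hh => n13 (adj_symm hh))
  · exact step_nonadj (ss_of_eq hss h) (Or.inl A33) (ne_of_adj a33).symm q56.symm
      (Or.inr (adj_symm A12)) q13 (ne_of_adj a12) sxy (fun hh => n13 (adj_symm hh))
  · exact step_neg (ss_of_eq hss h) (Or.inl A31) (ne_of_adj a31).symm q46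
      (Or.inr (adj_symm A23)) q23 (ne_of_adj a23) (G.bipartite (adj_symm a21)) (by rw [G.sign_symm]; exact s21)

lemma chordal_no_F6 {G : SignedBigraph V} (hC : G.IsChordal) : ¬ G.HasF6 := by
  rintro ⟨x1, x2, x3, x4, y1, y2, y3, y4, hpw, a11, a12, n13, n14, a21, a22, n23, n24, a31, a32, a33, a34, a41, a42, a43, a44, m1, m2, m3, m4, m5, m6, m7, m8, m9, m10, m11, m12, s11, s21, s32, s43, s44⟩
  simp only [List.pairwise_cons, List.mem_cons, List.not_mem_nil, or_false, List.mem_singleton,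
    forall_eq_or_imp, forall_eq, false_implies, implies_true, and_true, List.Pairwise.nil] at hpw
  obtain ⟨⟨q12, q13, q14, q15, q16, q17, q18⟩, ⟨q23, q24, q25, q26, q27, q28⟩, ⟨q34, q35, q36, q37, q38⟩, ⟨q45, q46, q47, q48⟩, ⟨q56, q57, q58⟩, ⟨q67, q68⟩, q78⟩ := hpw
  obtain ⟨s, a, b, hmem, hnotin, hss⟩ := exists_min_pattern_step hC
    [s(x1, y1), s(x1, y2), s(x2, y1), s(x2, y2), s(x3, y1), s(x3, y2), s(x3, y3), s(x3, y4), s(x4, y1), s(x4, y2), s(x4, y3), s(x4, y4)]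
    (by
      intro e he
      simp only [List.mem_cons, List.not_mem_nil, or_false] at he
      rcases he with rfl|rfl|rfl|rfl|rfl|rfl|rfl|rfl|rfl|rfl|rfl|rfl
      · exact (SimpleGraph.mem_edgeSet G.graph).mpr a11
      · exact (SimpleGraph.mem_edgeSet G.graph).mpr a12
      · exact (SimpleGraph.mem_edgeSet G.graph).mpr a21
      · exact (SimpleGraph.mem_edgeSet G.graph).mpr a22
      · exact (SimpleGraph.mem_edgeSet G.graph).mpr a31
      · exact (SimpleGraph.mem_edgeSet G.graph).mpr a32
      · exact (SimpleGraph.mem_edgeSet G.graph).mpr a33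
      · exact (SimpleGraph.mem_edgeSet G.graph).mpr a34
      · exact (SimpleGraph.mem_edgeSet G.graph).mpr a41
      · exact (SimpleGraph.mem_edgeSet G.graph).mpr a42
      · exact (SimpleGraph.mem_edgeSet G.graph).mpr a43
      · exact (SimpleGraph.mem_edgeSet G.graph).mpr a44
      )
    _ List.mem_cons_self
  have A11 : (G.deleteEdges s).Adj x1 y1 := adj_del.mpr ⟨a11, hnotin _ (by simp)⟩
  have A12 : (G.deleteEdges s).Adj x1 y2 := adj_del.mpr ⟨a12, hnotin _ (by simp)⟩
  have A21 : (G.deleteEdges s).Adj x2 y1 := adj_del.mpr ⟨a21, hnotin _ (by simp)⟩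
  have A22 : (G.deleteEdges s).Adj x2 y2 := adj_del.mpr ⟨a22, hnotin _ (by simp)⟩
  have A31 : (G.deleteEdges s).Adj x3 y1 := adj_del.mpr ⟨a31, hnotin _ (by simp)⟩
  have A32 : (G.deleteEdges s).Adj x3 y2 := adj_del.mpr ⟨a32, hnotin _ (by simp)⟩
  have A33 : (G.deleteEdges s).Adj x3 y3 := adj_del.mpr ⟨a33, hnotin _ (by simp)⟩
  have A34 : (G.deleteEdges s).Adj x3 y4 := adj_del.mpr ⟨a34, hnotin _ (by simp)⟩
  have A41 : (G.deleteEdges s).Adj x4 y1 := adj_del.mpr ⟨a41, hnotin _ (by simp)⟩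
  have A42 : (G.deleteEdges s).Adj x4 y2 := adj_del.mpr ⟨a42, hnotin _ (by simp)⟩
  have A43 : (G.deleteEdges s).Adj x4 y3 := adj_del.mpr ⟨a43, hnotin _ (by simp)⟩
  have A44 : (G.deleteEdges s).Adj x4 y4 := adj_del.mpr ⟨a44, hnotin _ (by simp)⟩
  have sxy : G.side y3 ≠ G.side x1 := by
    rw [show G.side x1 = G.side x3 from side_eq_of_adj_adj a11 a31]
    exact (G.bipartite (adj_symm a33))
  simp only [List.mem_cons, List.not_mem_nil, or_false] at hmem
  rcases hmem with h|h|h|h|h|h|h|h|h|h|h|h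
  · exact step_neg (ss_of_eq hss h) (Or.inl A12) (ne_of_adj a12).symm q56.symm
      (Or.inr (adj_symm A31)) q13.symm (ne_of_adj a31) (G.bipartite (adj_symm a32)) (by rw [G.sign_symm]; exact s32)
  · exact step_neg (ss_of_eq hss h) (Or.inl A11) (ne_of_adj a11).symm q56
      (Or.inr (adj_symm A22)) q12.symm (ne_of_adj a22) (G.bipartite (adj_symm a21)) (by rw [G.sign_symm]; exact s21)
  · exact step_neg (ss_of_eq hss h) (Or.inl A22) (ne_of_adj a22).symm q56.symm
      (Or.inr (adj_symm A31)) q23.symm (ne_of_adj a31) (G.bipartite (adj_symm a32)) (by rw [G.sign_symm]; exact s32)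
  · exact step_neg (ss_of_eq hss h) (Or.inl A21) (ne_of_adj a21).symm q56
      (Or.inr (adj_symm A12)) q12 (ne_of_adj a12) (G.bipartite (adj_symm a11)) (by rw [G.sign_symm]; exact s11)
  · exact step_nonadj (ss_of_eq hss h) (Or.inl A33) (ne_of_adj a33).symm q57.symm
      (Or.inr (adj_symm A11)) q13 (ne_of_adj a11) sxy (fun hh => n13 (adj_symm hh))
  · exact step_nonadj (ss_of_eq hss h) (Or.inl A33) (ne_of_adj a33).symm q67.symm
      (Or.inr (adj_symm A12)) q13 (ne_of_adj a12) sxy (fun hh => n13 (adj_symm hh))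
  · exact step_neg (ss_of_eq hss h) (Or.inl A34) (ne_of_adj a34).symm q78.symm
      (Or.inr (adj_symm A43)) q34.symm (ne_of_adj a43) (G.bipartite (adj_symm a44)) (by rw [G.sign_symm]; exact s44)
  · exact step_neg (ss_of_eq hss h) (Or.inl A33) (ne_of_adj a33).symm q78
      (Or.inr (adj_symm A44)) q34.symm (ne_of_adj a44) (G.bipartite (adj_symm a43)) (by rw [G.sign_symm]; exact s43)
  · exact step_nonadj (ss_of_eq hss h) (Or.inl A43) (ne_of_adj a43).symm q57.symm
      (Or.inr (adj_symm A11)) q14 (ne_of_adj a11) sxy (fun hh => n13 (adj_symm hh))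
  · exact step_nonadj (ss_of_eq hss h) (Or.inl A43) (ne_of_adj a43).symm q67.symm
      (Or.inr (adj_symm A12)) q14 (ne_of_adj a12) sxy (fun hh => n13 (adj_symm hh))
  · exact step_neg (ss_of_eq hss h) (Or.inl A42) (ne_of_adj a42).symm q67
      (Or.inr (adj_symm A33)) q34 (ne_of_adj a33) (G.bipartite (adj_symm a32)) (by rw [G.sign_symm]; exact s32)
  · exact step_neg (ss_of_eq hss h) (Or.inl A42) (ne_of_adj a42).symm q68
      (Or.inr (adj_symm A34)) q34 (ne_of_adj a34) (G.bipartite (adj_symm a32)) (by rw [G.sign_symm]; exact s32)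

end SignedBigraph
namespace SignedBigraph

variable {V : Type u}

lemma nested {G : SignedBigraph V} (hns : ¬ IsSeparableGraph G.graph) {u w : V}
    (hside : G.side u = G.side w) : G.Ns u ⊆ G.Ns w ∨ G.Ns w ⊆ G.Ns u := by
  by_contra hcon
  push_neg at hcon
  obtain ⟨a, ha, haw⟩ := Set.not_subset.mp hcon.1
  obtain ⟨b, hb, hbu⟩ := Set.not_subset.mp hcon.2
  have hua : G.Adj u a := ha
  have hwb : G.Adj w b := hb
  have hsa : G.side a ≠ G.side u := (G.bipartite hua).symm
  have hsb : G.side b ≠ G.side u := by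
    rw [hside]; exact (G.bipartite hwb).symm
  refine hns ⟨u, a, w, b, ?_, hua, hwb, not_adj_of_side_eq hside,
    (fun h => hbu h), (fun h => haw h.symm),
    not_adj_of_side_eq (bool_eq_of_ne_ne hsa hsb)⟩
  refine pairwise4 (ne_of_adj hua) ?_ (ne_of_side_ne hsb).symm
    (ne_of_side_ne (hside ▸ hsa)) ?_ (ne_of_adj hwb)
  · rintro rfl; exact haw ha
  · rintro rfl; exact hbu ha

lemma exists_locmin [Fintype V] {G : SignedBigraph V} (hns : ¬ IsSeparableGraph G.graph)
    {r c₀ : V} (h : G.Adj r c₀) : ∃ c ∈ G.Ns r, G.LocMin r c := by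
  classical
  obtain ⟨c, hc, hmin⟩ := Set.exists_min_image (G.Ns r) (fun x => (G.Ns x).ncard)
    (Set.toFinite _) ⟨c₀, h⟩
  have key : ∀ x ∈ G.Ns r, G.Ns c ⊆ G.Ns x := by
    intro x hx
    have hsd : G.side c = G.side x := side_eq_of_adj_adj (adj_symm hc) (adj_symm hx)
    rcases nested hns hsd with hsub | hsub
    · exact hsub
    · by_cases he : G.Ns c ⊆ G.Ns x
      · exact he
      · exfalso
        have hlt := Set.ncard_lt_ncard (ssubset_iff_subset_not_subset.mpr ⟨hsub, he⟩)
          (Set.toFinite _)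
        have := hmin x hx
        omega
  refine ⟨c, hc, hc, key, ?_⟩
  intro d hd y hy
  by_contra hyd
  have hmem2 : d ∈ G.Ns y := key y hy hd
  exact hyd ((mem_Ns.mp hmem2).symm)

lemma locmin_adj_cross {G : SignedBigraph V} {u v : V} (hlm : G.LocMin u v) {c d : V}
    (hc : c ∈ G.Ns u) (hd : d ∈ G.Ns v) : G.Adj c d :=
  (hlm.2.2 d hd hc).symm

lemma noSep_deleteEdge {G : SignedBigraph V} (hns : ¬ IsSeparableGraph G.graph)
    {u v : V} (hlm : G.LocMin u v) :
    ¬ IsSeparableGraph (G.deleteEdges {s(u, v)}).graph := by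
  rintro ⟨a, b, c, d, hpw, hab, hcd, h1, h2, h3, h4⟩
  simp only [List.pairwise_cons, List.mem_cons, List.not_mem_nil, or_false, List.mem_singleton,
    forall_eq_or_imp, forall_eq, false_implies, implies_true, and_true, List.Pairwise.nil] at hpw
  obtain ⟨⟨pab, pac, pad⟩, ⟨pbc, pbd⟩, pcd⟩ := hpw
  have Hab : G.Adj a b := (adj_del.mp hab).1
  have Hcd : G.Adj c d := (adj_del.mp hcd).1
  have key : ∀ x y p q : V, G.Adj x p → G.Adj y q → s(x, y) = s(u, v) →
      ¬ (G.deleteEdges {s(u, v)}).Adj p q → p ≠ x → p ≠ y → q ≠ x → q ≠ y → False := by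
    intro x y p q hxp hyq hxy hnpq hpx hpy hqx hqy
    have hadjpq : G.Adj p q := by
      rcases Sym2.eq_iff.mp hxy with ⟨rfl, rfl⟩ | ⟨rfl, rfl⟩
      · exact (locmin_adj_cross hlm hxp hyq)
      · exact (locmin_adj_cross hlm hyq hxp).symm
    have : s(p, q) = s(u, v) := by
      by_contra hne
      exact hnpq (adj_del.mpr ⟨hadjpq, by simpa using hne⟩)
    rcases Sym2.eq_iff.mp hxy with ⟨rfl, rfl⟩ | ⟨rfl, rfl⟩ <;>
      rcases Sym2.eq_iff.mp this with ⟨rfl, rfl⟩ | ⟨rfl, rfl⟩ <;> simp_all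
  by_cases hac : G.Adj a c
  · have : s(a, c) = s(u, v) := by
      by_contra hne
      exact h1 (adj_del.mpr ⟨hac, by simpa using hne⟩)
    exact key a c b d Hab Hcd this h4 pab.symm pbc (Ne.symm pad) (Ne.symm pcd)
  by_cases had : G.Adj a d
  · have : s(a, d) = s(u, v) := by
      by_contra hne
      exact h2 (adj_del.mpr ⟨had, by simpa using hne⟩)
    exact key a d b c Hab Hcd.symm this h3 pab.symm pbd pac.symm pcd
  by_cases hbc : G.Adj b c
  · have : s(b, c) = s(u, v) := by
      by_contra hne
      exact h3 (adj_del.mpr ⟨hbc, by simpa using hne⟩)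
    exact key b c a d Hab.symm Hcd this h2 pab pac (Ne.symm pbd) (Ne.symm pcd)
  by_cases hbd : G.Adj b d
  · have : s(b, d) = s(u, v) := by
      by_contra hne
      exact h4 (adj_del.mpr ⟨hbd, by simpa using hne⟩)
    exact key b d a c Hab.symm Hcd.symm this h1 pab pad pbc.symm pcd
  exact hns ⟨a, b, c, d, pairwise4 pab pac pad pbc pbd pcd, Hab, Hcd, hac, had, hbc, hbd⟩

lemma signedSimplicial_of {G : SignedBigraph V} {u v : V} (hlm : G.LocMin u v)
    (hga : G.GoodA u v) : G.SignedSimplicial u v := by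
  refine ⟨hlm.1, ?_⟩
  intro c hc d hd hside
  obtain ⟨hc1, hc2⟩ := hc
  obtain ⟨hd1, hd2⟩ := hd
  simp only [Set.mem_insert_iff, Set.mem_singleton_iff] at hc2 hd2
  push_neg at hc2 hd2
  have main : ∀ c' d', c' ∈ G.Ns u → c' ≠ v → d' ∈ G.Ns v → d' ≠ u →
      G.Adj c' d' ∧ G.sign c' d' = true := by
    intro c' d' h1 h2 h3 h4
    exact ⟨locmin_adj_cross hlm h1 h3, hga c' h1 h2 d' h3 h4⟩
  rcases hc1 with hcu | hcv
  · rcases hd1 with hdu | hdv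
    · exact absurd (side_eq_of_adj_adj (adj_symm hcu) (adj_symm hdu)) hside
    · exact main c d hcu hc2.2 hdv hd2.1
  · rcases hd1 with hdu | hdv
    · have := main d c hdu hd2.2 hcv hc2.1
      exact ⟨this.1.symm, by rw [G.sign_symm]; exact this.2⟩
    · exact absurd (side_eq_of_adj_adj (adj_symm hcv) (adj_symm hdv)) hside

lemma isChordal_cons {G : SignedBigraph V} {u v : V} (hadj : G.Adj u v)
    (hss : G.SignedSimplicial u v)
    (h' : (G.deleteEdges {s(u, v)}).IsChordal) : G.IsChordal := by
  obtain ⟨l, hnd, hmem, hstep⟩ := h'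
  have hedge : s(u, v) ∈ G.graph.edgeSet := (SimpleGraph.mem_edgeSet G.graph).mpr hadj
  have hdelE : (G.deleteEdges {s(u, v)}).graph.edgeSet = G.graph.edgeSet \ {s(u, v)} :=
    SimpleGraph.edgeSet_deleteEdges _
  have hnotmem : s(u, v) ∉ l := by
    intro hmem'
    have := (hmem _).mpr hmem'
    rw [hdelE] at this
    exact this.2 rfl
  refine ⟨s(u, v) :: l, List.nodup_cons.mpr ⟨hnotmem, hnd⟩, ?_, ?_⟩
  · intro e
    constructor
    · intro he
      by_cases heq : e = s(u, v)
      · exact heq ▸ List.mem_cons_self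
      · refine List.mem_cons.mpr (Or.inr ((hmem e).mp ?_))
        rw [hdelE]
        exact ⟨he, heq⟩
    · intro he
      rcases List.mem_cons.mp he with rfl | he'
      · exact hedge
      · have := (hmem e).mpr he'
        rw [hdelE] at this
        exact this.1
  · intro i hi
    cases i with
    | zero =>
      refine ⟨u, v, rfl, ?_⟩
      have hE : G.deleteEdges {e | e ∈ (s(u, v) :: l).take 0} = G := by
        rw [show {e : Sym2 V | e ∈ (s(u, v) :: l).take 0} = (∅ : Set (Sym2 V)) by simp]
        exact deleteEdges_empty' G
      rw [hE]
      exact hss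
    | succ j =>
      have hj : j < l.length := by simpa using hi
      obtain ⟨a, b, hab, hssj⟩ := hstep j hj
      refine ⟨a, b, ?_, ?_⟩
      · simpa using hab
      · have heq : G.deleteEdges {e | e ∈ (s(u, v) :: l).take (j + 1)} =
            (G.deleteEdges {s(u, v)}).deleteEdges {e | e ∈ l.take j} := by
          rw [deleteEdges_deleteEdges']
          congr 1
          ext e
          simp [List.take_succ_cons]
        rw [heq]
        exact hssj

lemma adj_delP {G : SignedBigraph V} {p : V → Prop} {a b : V} :
    (G.deleteEdges {e | ∃ w, p w ∧ w ∈ e}).Adj a b ↔ G.Adj a b ∧ ¬ p a ∧ ¬ p b := by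
  rw [adj_del]
  constructor
  · rintro ⟨h, hn⟩
    refine ⟨h, ?_, ?_⟩ <;> intro hp <;> exact hn ⟨_, hp, by simp⟩
  · rintro ⟨h, ha, hb⟩
    refine ⟨h, ?_⟩
    rintro ⟨w, hw, hmemw⟩
    rcases Sym2.mem_iff.mp hmemw with rfl | rfl
    exacts [ha hw, hb hw]

lemma noSep_delP {G : SignedBigraph V} (hns : ¬ IsSeparableGraph G.graph) (p : V → Prop) :
    ¬ IsSeparableGraph (G.deleteEdges {e | ∃ w, p w ∧ w ∈ e}).graph := by
  rintro ⟨a, b, c, d, hpw, hab, hcd, h1, h2, h3, h4⟩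
  have Hab := adj_delP.mp hab
  have Hcd := adj_delP.mp hcd
  exact hns ⟨a, b, c, d, hpw, Hab.1, Hcd.1,
    fun h => h1 (adj_delP.mpr ⟨h, Hab.2.1, Hcd.2.1⟩),
    fun h => h2 (adj_delP.mpr ⟨h, Hab.2.1, Hcd.2.2⟩),
    fun h => h3 (adj_delP.mpr ⟨h, Hab.2.2, Hcd.2.1⟩),
    fun h => h4 (adj_delP.mpr ⟨h, Hab.2.2, Hcd.2.2⟩)⟩

end SignedBigraph
namespace SignedBigraph

variable {V : Type u}

section transfer

variable {G : SignedBigraph V}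

lemma hasF1_mono {s : Set (Sym2 V)} (h : (G.deleteEdges s).HasF1) : G.HasF1 := by
  obtain ⟨u1, u2, v1, v2, hpw, a11, a12, a21, a22, _, _, s11, s12, s21, s22⟩ := h
  simp only [List.pairwise_cons, List.mem_cons, List.not_mem_nil, or_false, List.mem_singleton,
    forall_eq_or_imp, forall_eq, false_implies, implies_true, and_true, List.Pairwise.nil] at hpw
  obtain ⟨⟨q12, _, _⟩, ⟨_, _⟩, q34⟩ := hpw
  exact mkF1 q12 q34 (adj_del.mp a11).1 (adj_del.mp a12).1 (adj_del.mp a21).1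
    (adj_del.mp a22).1 s11 s12 s21 s22

lemma hasF2_mono {s : Set (Sym2 V)} (h : (G.deleteEdges s).HasF2) : G.HasF2 := by
  obtain ⟨u1, u2, v1, v2, v3, hpw, a11, a12, a13, a21, a22, a23, _, _, _, _,
    s11, s12, s22, s23⟩ := h
  simp only [List.pairwise_cons, List.mem_cons, List.not_mem_nil, or_false, List.mem_singleton,
    forall_eq_or_imp, forall_eq, false_implies, implies_true, and_true, List.Pairwise.nil] at hpw
  obtain ⟨⟨q12, _, _, _⟩, ⟨_, _, _⟩, ⟨q34, q35⟩, q45⟩ := hpw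
  exact mkF2 q12 q34 q35 q45 (adj_del.mp a11).1 (adj_del.mp a12).1 (adj_del.mp a13).1
    (adj_del.mp a21).1 (adj_del.mp a22).1 (adj_del.mp a23).1 s11 s12 s22 s23

lemma hasF3_mono {s : Set (Sym2 V)} (h : (G.deleteEdges s).HasF3) : G.HasF3 := by
  obtain ⟨u1, u2, v1, v2, v3, v4, hpw, a11, a12, a13, a14, a21, a22, a23, a24,
    _, _, _, _, _, _, _, s11, s12, s23, s24⟩ := h
  simp only [List.pairwise_cons, List.mem_cons, List.not_mem_nil, or_false, List.mem_singleton,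
    forall_eq_or_imp, forall_eq, false_implies, implies_true, and_true, List.Pairwise.nil] at hpw
  obtain ⟨⟨q12, _, _, _, _⟩, ⟨_, _, _, _⟩, ⟨q34, q35, q36⟩, ⟨q45, q46⟩, q56⟩ := hpw
  exact mkF3 q12 q34 q35 q36 q45 q46 q56 (adj_del.mp a11).1 (adj_del.mp a12).1
    (adj_del.mp a13).1 (adj_del.mp a14).1 (adj_del.mp a21).1 (adj_del.mp a22).1
    (adj_del.mp a23).1 (adj_del.mp a24).1 s11 s12 s23 s24

lemma hasF4_mono {s : Set (Sym2 V)} (h : (G.deleteEdges s).HasF4) : G.HasF4 := by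
  obtain ⟨u1, u2, u3, v1, v2, v3, hpw, a11, a12, a13, a21, a22, a23, a31, a32, a33,
    _, _, _, _, _, _, s11, s22, s33⟩ := h
  simp only [List.pairwise_cons, List.mem_cons, List.not_mem_nil, or_false, List.mem_singleton,
    forall_eq_or_imp, forall_eq, false_implies, implies_true, and_true, List.Pairwise.nil] at hpw
  obtain ⟨⟨q12, q13, _, _, _⟩, ⟨q23, _, _, _⟩, ⟨_, _, _⟩, ⟨q45, q46⟩, q56⟩ := hpw
  exact mkF4 q12 q13 q23 q45 q46 q56 (adj_del.mp a11).1 (adj_del.mp a12).1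
    (adj_del.mp a13).1 (adj_del.mp a21).1 (adj_del.mp a22).1 (adj_del.mp a23).1
    (adj_del.mp a31).1 (adj_del.mp a32).1 (adj_del.mp a33).1 s11 s22 s33

lemma hasF5_delP {p : V → Prop}
    (h : (G.deleteEdges {e | ∃ w, p w ∧ w ∈ e}).HasF5) : G.HasF5 := by
  obtain ⟨x1, x2, x3, y1, y2, y3, hpw, a11, a12, n13, a21, a22, a23, a31, a32, a33,
    _, _, _, _, _, _, s21, s32⟩ := h
  simp only [List.pairwise_cons, List.mem_cons, List.not_mem_nil, or_false, List.mem_singleton,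
    forall_eq_or_imp, forall_eq, false_implies, implies_true, and_true, List.Pairwise.nil] at hpw
  obtain ⟨⟨q12, q13, _, _, _⟩, ⟨q23, _, _, _⟩, ⟨_, _, _⟩, ⟨q45, q46⟩, q56⟩ := hpw
  have A11 := adj_delP.mp a11
  have A12 := adj_delP.mp a12
  have A21 := adj_delP.mp a21
  have A22 := adj_delP.mp a22
  have A23 := adj_delP.mp a23
  have A31 := adj_delP.mp a31
  have A32 := adj_delP.mp a32
  have A33 := adj_delP.mp a33
  exact mkF5 q12 q13 q23 q45 q46 q56 A11.1 A12.1
    (fun hh => n13 (adj_delP.mpr ⟨hh, A11.2.1, A23.2.2⟩))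
    A21.1 A22.1 A23.1 A31.1 A32.1 A33.1 s21 s32

lemma hasF6_delP {p : V → Prop}
    (h : (G.deleteEdges {e | ∃ w, p w ∧ w ∈ e}).HasF6) : G.HasF6 := by
  obtain ⟨x1, x2, x3, x4, y1, y2, y3, y4, hpw, a11, a12, n13, n14, a21, a22, n23, n24,
    a31, a32, a33, a34, a41, a42, a43, a44, _, _, _, _, _, _, _, _, _, _, _, _,
    s11, s21, s32, s43, s44⟩ := h
  simp only [List.pairwise_cons, List.mem_cons, List.not_mem_nil, or_false, List.mem_singleton,
    forall_eq_or_imp, forall_eq, false_implies, implies_true, and_true, List.Pairwise.nil] at hpw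
  obtain ⟨⟨q12, q13, q14, _, _, _, _⟩, ⟨q23, q24, _, _, _, _⟩, ⟨q34, _, _, _, _⟩,
    ⟨_, _, _, _⟩, ⟨q56, q57, q58⟩, ⟨q67, q68⟩, q78⟩ := hpw
  have A11 := adj_delP.mp a11
  have A12 := adj_delP.mp a12
  have A21 := adj_delP.mp a21
  have A22 := adj_delP.mp a22
  have A31 := adj_delP.mp a31
  have A32 := adj_delP.mp a32
  have A33 := adj_delP.mp a33
  have A34 := adj_delP.mp a34
  have A41 := adj_delP.mp a41
  have A42 := adj_delP.mp a42
  have A43 := adj_delP.mp a43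
  have A44 := adj_delP.mp a44
  exact mkF6 q12 q34 q56 q78 q13 q14 q23 q24 q57 q58 q67 q68
    A11.1 A12.1
    (fun hh => n13 (adj_delP.mpr ⟨hh, A11.2.1, A33.2.2⟩))
    (fun hh => n14 (adj_delP.mpr ⟨hh, A11.2.1, A34.2.2⟩))
    A21.1 A22.1
    (fun hh => n23 (adj_delP.mpr ⟨hh, A21.2.1, A33.2.2⟩))
    (fun hh => n24 (adj_delP.mpr ⟨hh, A21.2.1, A34.2.2⟩))
    A31.1 A32.1 A33.1 A34.1 A41.1 A42.1 A43.1 A44.1 s11 s21 s32 s43 s44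

lemma hasF5_delE {u v : V} (hlm : G.LocMin u v) (hga : G.GoodA u v)
    (h5 : ¬ G.HasF5) (h : (G.deleteEdges {s(u, v)}).HasF5) : False := by
  obtain ⟨x1, x2, x3, y1, y2, y3, hpw, a11, a12, n13, a21, a22, a23, a31, a32, a33,
    _, _, _, _, _, _, s21, s32⟩ := h
  simp only [List.pairwise_cons, List.mem_cons, List.not_mem_nil, or_false, List.mem_singleton,
    forall_eq_or_imp, forall_eq, false_implies, implies_true, and_true, List.Pairwise.nil] at hpw
  obtain ⟨⟨q12, q13, _, _, _⟩, ⟨q23, _, _, _⟩, ⟨_, _, _⟩, ⟨q45, q46⟩, q56⟩ := hpw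
  have A11 := (adj_del.mp a11).1
  have A12 := (adj_del.mp a12).1
  have A21 := (adj_del.mp a21).1
  have A22 := (adj_del.mp a22).1
  have A23 := (adj_del.mp a23).1
  have A31 := (adj_del.mp a31).1
  have A32 := (adj_del.mp a32).1
  have A33 := (adj_del.mp a33).1
  by_cases hxy : G.Adj x1 y3
  · have heq : s(x1, y3) = s(u, v) := by
      by_contra hne
      exact n13 (adj_del.mpr ⟨hxy, by simpa using hne⟩)
    have s21' : G.sign x2 y1 = false := s21
    rcases Sym2.eq_iff.mp heq with ⟨rfl, rfl⟩ | ⟨rfl, rfl⟩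
    · have := hga y1 A11 q46 x2 ((mem_Ns).mpr A23.symm) q12.symm
      rw [G.sign_symm, s21'] at this
      exact Bool.noConfusion this
    · have := hga x2 ((mem_Ns).mpr A23.symm) q12.symm y1 A11 q46
      rw [s21'] at this
      exact Bool.noConfusion this
  · exact h5 (mkF5 q12 q13 q23 q45 q46 q56 A11 A12 hxy A21 A22 A23 A31 A32 A33 s21 s32)

lemma hasF6_delE {u v : V} (hlm : G.LocMin u v) (hga : G.GoodA u v)
    (h6 : ¬ G.HasF6) (h : (G.deleteEdges {s(u, v)}).HasF6) : False := by
  obtain ⟨x1, x2, x3, x4, y1, y2, y3, y4, hpw, a11, a12, n13, n14, a21, a22, n23, n24,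
    a31, a32, a33, a34, a41, a42, a43, a44, _, _, _, _, _, _, _, _, _, _, _, _,
    s11, s21, s32, s43, s44⟩ := h
  simp only [List.pairwise_cons, List.mem_cons, List.not_mem_nil, or_false, List.mem_singleton,
    forall_eq_or_imp, forall_eq, false_implies, implies_true, and_true, List.Pairwise.nil] at hpw
  obtain ⟨⟨q12, q13, q14, _, _, _, _⟩, ⟨q23, q24, _, _, _, _⟩, ⟨q34, _, _, _, _⟩,
    ⟨_, _, _, _⟩, ⟨q56, q57, q58⟩, ⟨q67, q68⟩, q78⟩ := hpw
  have A11 := (adj_del.mp a11).1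
  have A12 := (adj_del.mp a12).1
  have A21 := (adj_del.mp a21).1
  have A22 := (adj_del.mp a22).1
  have A31 := (adj_del.mp a31).1
  have A32 := (adj_del.mp a32).1
  have A33 := (adj_del.mp a33).1
  have A34 := (adj_del.mp a34).1
  have A41 := (adj_del.mp a41).1
  have A42 := (adj_del.mp a42).1
  have A43 := (adj_del.mp a43).1
  have A44 := (adj_del.mp a44).1
  have viol : ∀ xi yj, G.Adj xi y2 → G.Adj x3 yj → yj ≠ y2 → x3 ≠ xi →
      s(xi, yj) = s(u, v) → False := by
    intro xi yj hxi2 h3j hne1 hne2 heq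
    have s32' : G.sign x3 y2 = false := s32
    rcases Sym2.eq_iff.mp heq with ⟨rfl, rfl⟩ | ⟨rfl, rfl⟩
    · have := hga y2 hxi2 hne1.symm x3 ((mem_Ns).mpr h3j.symm) hne2
      rw [G.sign_symm, s32'] at this
      exact Bool.noConfusion this
    · have := hga x3 ((mem_Ns).mpr h3j.symm) hne2 y2 hxi2 hne1.symm
      rw [s32'] at this
      exact Bool.noConfusion this
  by_cases h13 : G.Adj x1 y3
  · exact viol x1 y3 A12 A33 q67.symm q13.symm (by
      by_contra hne
      exact n13 (adj_del.mpr ⟨h13, by simpa using hne⟩))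
  by_cases h14 : G.Adj x1 y4
  · exact viol x1 y4 A12 A34 q68.symm q13.symm (by
      by_contra hne
      exact n14 (adj_del.mpr ⟨h14, by simpa using hne⟩))
  by_cases h23 : G.Adj x2 y3
  · exact viol x2 y3 A22 A33 q67.symm q23.symm (by
      by_contra hne
      exact n23 (adj_del.mpr ⟨h23, by simpa using hne⟩))
  by_cases h24 : G.Adj x2 y4
  · exact viol x2 y4 A22 A34 q68.symm q23.symm (by
      by_contra hne
      exact n24 (adj_del.mpr ⟨h24, by simpa using hne⟩))
  exact h6 (mkF6 q12 q34 q56 q78 q13 q14 q23 q24 q57 q58 q67 q68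
    A11 A12 h13 h14 A21 A22 h23 h24 A31 A32 A33 A34 A41 A42 A43 A44 s11 s21 s32 s43 s44)

end transfer

/-- All six patterns absent. -/
def NF (G : SignedBigraph V) : Prop :=
  ¬ G.HasF1 ∧ ¬ G.HasF2 ∧ ¬ G.HasF3 ∧ ¬ G.HasF4 ∧ ¬ G.HasF5 ∧ ¬ G.HasF6

lemma NF_delE {G : SignedBigraph V} (hnf : G.NF) {u v : V} (hlm : G.LocMin u v)
    (hga : G.GoodA u v) : (G.deleteEdges {s(u, v)}).NF := by
  obtain ⟨h1, h2, h3, h4, h5, h6⟩ := hnf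
  exact ⟨fun h => h1 (hasF1_mono h), fun h => h2 (hasF2_mono h), fun h => h3 (hasF3_mono h),
    fun h => h4 (hasF4_mono h), fun h => hasF5_delE hlm hga h5 h,
    fun h => hasF6_delE hlm hga h6 h⟩

lemma NF_delP {G : SignedBigraph V} (hnf : G.NF) (p : V → Prop) :
    (G.deleteEdges {e | ∃ w, p w ∧ w ∈ e}).NF := by
  obtain ⟨h1, h2, h3, h4, h5, h6⟩ := hnf
  exact ⟨fun h => h1 (hasF1_mono h), fun h => h2 (hasF2_mono h), fun h => h3 (hasF3_mono h),
    fun h => h4 (hasF4_mono h), fun h => h5 (hasF5_delP h), fun h => h6 (hasF6_delP h)⟩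

end SignedBigraph
namespace SignedBigraph

variable {V : Type u}

lemma edge_ncard_lt [Fintype V] {G : SignedBigraph V} {s : Set (Sym2 V)} {e : Sym2 V}
    (he : e ∈ G.graph.edgeSet) (hes : e ∈ s) :
    ((G.deleteEdges s).graph.edgeSet).ncard < (G.graph.edgeSet).ncard := by
  have h1 : (G.deleteEdges s).graph.edgeSet = G.graph.edgeSet \ s :=
    SimpleGraph.edgeSet_deleteEdges _
  rw [h1]
  refine Set.ncard_lt_ncard (ssubset_iff_subset_not_subset.mpr
    ⟨Set.diff_subset, fun hsub => ?_⟩) (Set.toFinite _)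
  exact (hsub he).2 hes

lemma goodA_neg {G : SignedBigraph V} {u v : V} (h : ¬ G.GoodA u v) :
    ∃ c d, c ∈ G.Ns u ∧ c ≠ v ∧ d ∈ G.Ns v ∧ d ≠ u ∧ G.sign c d = false := by
  unfold GoodA at h
  push_neg at h
  obtain ⟨c, hc, hcne, d, hd, hdne, hsgn⟩ := h
  exact ⟨c, d, hc, hcne, hd, hdne, sign_false_of_not_true hsgn⟩

theorem bigclaim [Fintype V] : ∀ (n : ℕ) (G : SignedBigraph V),
    (G.graph.edgeSet).ncard ≤ n →
    ¬ IsSeparableGraph G.graph → G.NF → ∀ {p q : V}, G.Adj p q →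
    ∃ u v, G.Adj u v ∧ G.LocMin u v ∧ G.GoodA u v := by
  intro n
  induction n with
  | zero =>
    intro H hle _ _ p q hpq
    exfalso
    have hmem : s(p, q) ∈ H.graph.edgeSet := (SimpleGraph.mem_edgeSet H.graph).mpr hpq
    have h1 : H.graph.edgeSet = ∅ :=
      (Set.ncard_eq_zero (Set.toFinite _)).mp (le_antisymm hle (Nat.zero_le _))
    rw [h1] at hmem
    exact hmem
  | succ n ih =>
    intro H hle hns hnf p q hpq
    classical
    set σ := H.side p with hσdef
    obtain ⟨x₀, hx₀S, hx₀min⟩ := Set.exists_min_image {w : V | H.side w = σ ∧ (H.Ns w).Nonempty}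
      (fun w => (H.Ns w).ncard) (Set.toFinite _) ⟨p, rfl, ⟨q, hpq⟩⟩
    obtain ⟨hx₀σ, hx₀ne⟩ := hx₀S
    have Amin : ∀ r : V, H.side r = σ → (H.Ns r).Nonempty → H.Ns x₀ ⊆ H.Ns r := by
      intro r hr hne'
      rcases nested hns (hx₀σ.trans hr.symm) with hsub | hsub
      · exact hsub
      · by_cases he : H.Ns x₀ ⊆ H.Ns r
        · exact he
        · exfalso
          have hlt := Set.ncard_lt_ncard (ssubset_iff_subset_not_subset.mpr ⟨hsub, he⟩)
            (Set.toFinite _)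
          have := hx₀min r ⟨hr, hne'⟩
          omega
    have sideA : ∀ c ∈ H.Ns x₀, H.side c ≠ σ := by
      intro c hc
      rw [← hx₀σ]
      exact (H.bipartite (mem_Ns.mp hc)).symm
    have colS : ∀ c ∈ H.Ns x₀, ∀ r : V, r ∈ H.Ns c ↔ (H.side r = σ ∧ (H.Ns r).Nonempty) := by
      intro c hc r
      constructor
      · intro hr
        refine ⟨bool_eq_of_ne_ne ((H.bipartite (mem_Ns.mp hr)).symm) (Ne.symm (sideA c hc)), ?_⟩
        exact ⟨c, (mem_Ns.mp hr).symm⟩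
      · rintro ⟨h1, h2⟩
        exact mem_Ns.mpr (mem_Ns.mp (Amin r h1 h2 hc)).symm
    set X0 : V → Prop := fun w => H.side w = σ ∧ H.Ns w = H.Ns x₀ with hX0def
    have hX0x₀ : X0 x₀ := ⟨hx₀σ, rfl⟩
    have cell : ∀ c r, c ∈ H.Ns x₀ → X0 r → H.Adj r c := by
      intro c r hc hr
      rw [← mem_Ns, hr.2]
      exact hc
    obtain ⟨a₀, ha₀⟩ := hx₀ne
    -- the good bottom-corner case
    by_cases hG : ∃ w c₀, X0 w ∧ c₀ ∈ H.Ns x₀ ∧ H.GoodA w c₀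
    · obtain ⟨w, c₀, hw, hc₀, hga⟩ := hG
      have hwadj : H.Adj w c₀ := cell c₀ w hc₀ hw
      refine ⟨w, c₀, hwadj, ⟨hwadj, ?_, ?_⟩, hga⟩
      · intro c hc r hr
        rw [hw.2] at hc
        exact (colS c hc r).mpr ((colS c₀ hc₀ r).mp hr)
      · intro d hd
        rw [hw.2]
        have hdS := (colS c₀ hc₀ d).mp hd
        exact Amin d hdS.1 hdS.2
    push_neg at hG
    have FAIL : ∀ w c₀, X0 w → c₀ ∈ H.Ns x₀ → ∃ c d, c ∈ H.Ns x₀ ∧ c ≠ c₀ ∧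
        H.side d = σ ∧ (H.Ns d).Nonempty ∧ d ≠ w ∧ H.sign c d = false := by
      intro w c₀ hw hc₀
      have hng := hG w c₀ hw hc₀
      unfold GoodA at hng
      push_neg at hng
      obtain ⟨c, hc, hcne, d, hd, hdne, hsgn⟩ := hng
      rw [hw.2] at hc
      have hdS := (colS c₀ hc₀ d).mp hd
      exact ⟨c, d, hc, hcne, hdS.1, hdS.2, hdne, sign_false_of_not_true hsgn⟩
    -- the L1 case: all negative edges live on X0-rows
    by_cases hL1 : ∀ c d : V, H.Adj c d → H.sign c d = false → H.side d = σ → H.Ns d = H.Ns x₀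
    · exfalso
      have P : ∀ w c₀, X0 w → c₀ ∈ H.Ns x₀ → ∃ c d, c ∈ H.Ns x₀ ∧ c ≠ c₀ ∧ X0 d ∧ d ≠ w ∧
          H.sign c d = false := by
        intro w c₀ hw hc₀
        obtain ⟨c, d, hc, hcne, hdσ, hdne', hdw, hsgn⟩ := FAIL w c₀ hw hc₀
        have hadj : H.Adj c d := ((H.memNs d c).mp (Amin d hdσ hdne' hc)).symm
        exact ⟨c, d, hc, hcne, ⟨hdσ, hL1 c d hadj hsgn hdσ⟩, hdw, hsgn⟩
      obtain ⟨c1, r1, hc1, -, hr1, -, n1⟩ := P x₀ a₀ hX0x₀ ha₀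
      obtain ⟨c2, r2, hc2, hc21, hr2, hr21, n2⟩ := P r1 c1 hr1 hc1
      obtain ⟨c3, r3, hc3, hc32, hr3, hr31, n3⟩ := P r1 c2 hr1 hc2
      have pr12 : r1 ≠ r2 := hr21.symm
      have pc12 : c1 ≠ c2 := hc21.symm
      by_cases e31 : c3 = c1
      · by_cases e32 : r3 = r2
        · have n3' : H.sign c1 r2 = false := by rw [← e31, ← e32]; exact n3
          obtain ⟨c4, r4, hc4, hc41, hr4, hr42, n4⟩ := P r2 c1 hr2 hc1
          by_cases e41 : r4 = r1
          · by_cases e42 : c4 = c2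
            · exact hnf.1 (mkF1 pr12 pc12 (cell c1 r1 hc1 hr1) (cell c2 r1 hc2 hr1) (cell c1 r2 hc1 hr2) (cell c2 r2 hc2 hr2) (by rw [H.sign_symm]; exact n1) (by rw [H.sign_symm, ← e42, ← e41]; exact n4) (by rw [H.sign_symm]; exact n3') (by rw [H.sign_symm]; exact n2))
            · exact hnf.2.1 (mkF2 pr12 hc41 e42 pc12 (cell c4 r1 hc4 hr1) (cell c1 r1 hc1 hr1) (cell c2 r1 hc2 hr1) (cell c4 r2 hc4 hr2) (cell c1 r2 hc1 hr2) (cell c2 r2 hc2 hr2) (by rw [H.sign_symm, ← e41]; exact n4) (by rw [H.sign_symm]; exact n1) (by rw [H.sign_symm]; exact n3') (by rw [H.sign_symm]; exact n2))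
          · by_cases e42 : c4 = c2
            · exact hnf.2.1 (mkF2 pc12 pr12 (fun hh => e41 hh.symm) (fun hh => hr42 hh.symm) (cell c1 r1 hc1 hr1).symm (cell c1 r2 hc1 hr2).symm (cell c1 r4 hc1 hr4).symm (cell c2 r1 hc2 hr1).symm (cell c2 r2 hc2 hr2).symm (cell c2 r4 hc2 hr4).symm n1 n3' n2 (by rw [← e42]; exact n4))
            · exact hnf.2.2.2.1 (mkF4 pr12 (fun hh => e41 hh.symm) (fun hh => hr42 hh.symm) pc12 hc41.symm (fun hh => e42 hh.symm) (cell c1 r1 hc1 hr1) (cell c2 r1 hc2 hr1) (cell c4 r1 hc4 hr1) (cell c1 r2 hc1 hr2) (cell c2 r2 hc2 hr2) (cell c4 r2 hc4 hr2) (cell c1 r4 hc1 hr4) (cell c2 r4 hc2 hr4) (cell c4 r4 hc4 hr4) (by rw [H.sign_symm]; exact n1) (by rw [H.sign_symm]; exact n2) (by rw [H.sign_symm]; exact n4))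
        · have n3' : H.sign c1 r3 = false := by rw [← e31]; exact n3
          obtain ⟨c4, r4, hc4, hc41, hr4, hr42, n4⟩ := P r2 c1 hr2 hc1
          by_cases e42 : c4 = c2
          · by_cases e41 : r4 = r1
            · exact hnf.2.1 (mkF2 pc12 hr31 e32 pr12 (cell c1 r3 hc1 hr3).symm (cell c1 r1 hc1 hr1).symm (cell c1 r2 hc1 hr2).symm (cell c2 r3 hc2 hr3).symm (cell c2 r1 hc2 hr1).symm (cell c2 r2 hc2 hr2).symm n3' n1 (by rw [← e42, ← e41]; exact n4) n2)
            · by_cases e43 : r4 = r3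
              · exact hnf.2.1 (mkF2 pc12 hr31.symm pr12 e32 (cell c1 r1 hc1 hr1).symm (cell c1 r3 hc1 hr3).symm (cell c1 r2 hc1 hr2).symm (cell c2 r1 hc2 hr1).symm (cell c2 r3 hc2 hr3).symm (cell c2 r2 hc2 hr2).symm n1 n3' (by rw [← e42, ← e43]; exact n4) n2)
              · exact hnf.2.2.1 (mkF3 pc12 hr31.symm pr12 (fun hh => e41 hh.symm) e32 (fun hh => e43 hh.symm) hr42.symm (cell c1 r1 hc1 hr1).symm (cell c1 r3 hc1 hr3).symm (cell c1 r2 hc1 hr2).symm (cell c1 r4 hc1 hr4).symm (cell c2 r1 hc2 hr1).symm (cell c2 r3 hc2 hr3).symm (cell c2 r2 hc2 hr2).symm (cell c2 r4 hc2 hr4).symm n1 n3' n2 (by rw [← e42]; exact n4))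
          · by_cases e41 : r4 = r1
            · exact hnf.2.2.2.1 (mkF4 e32 hr31 hr21 pc12 hc41.symm (fun hh => e42 hh.symm) (cell c1 r3 hc1 hr3) (cell c2 r3 hc2 hr3) (cell c4 r3 hc4 hr3) (cell c1 r2 hc1 hr2) (cell c2 r2 hc2 hr2) (cell c4 r2 hc4 hr2) (cell c1 r1 hc1 hr1) (cell c2 r1 hc2 hr1) (cell c4 r1 hc4 hr1) (by rw [H.sign_symm]; exact n3') (by rw [H.sign_symm]; exact n2) (by rw [H.sign_symm, ← e41]; exact n4))
            · by_cases e43 : r4 = r3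
              · exact hnf.2.2.2.1 (mkF4 pr12 hr31.symm (fun hh => e32 hh.symm) pc12 hc41.symm (fun hh => e42 hh.symm) (cell c1 r1 hc1 hr1) (cell c2 r1 hc2 hr1) (cell c4 r1 hc4 hr1) (cell c1 r2 hc1 hr2) (cell c2 r2 hc2 hr2) (cell c4 r2 hc4 hr2) (cell c1 r3 hc1 hr3) (cell c2 r3 hc2 hr3) (cell c4 r3 hc4 hr3) (by rw [H.sign_symm]; exact n1) (by rw [H.sign_symm]; exact n2) (by rw [H.sign_symm, ← e43]; exact n4))
              · exact hnf.2.2.2.1 (mkF4 pr12 (fun hh => e41 hh.symm) (fun hh => hr42 hh.symm) pc12 hc41.symm (fun hh => e42 hh.symm) (cell c1 r1 hc1 hr1) (cell c2 r1 hc2 hr1) (cell c4 r1 hc4 hr1) (cell c1 r2 hc1 hr2) (cell c2 r2 hc2 hr2) (cell c4 r2 hc4 hr2) (cell c1 r4 hc1 hr4) (cell c2 r4 hc2 hr4) (cell c4 r4 hc4 hr4) (by rw [H.sign_symm]; exact n1) (by rw [H.sign_symm]; exact n2) (by rw [H.sign_symm]; exact n4))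
      · by_cases e32 : r3 = r2
        · have n3' : H.sign c3 r2 = false := by rw [← e32]; exact n3
          obtain ⟨c4, r4, hc4, hc41, hr4, hr42, n4⟩ := P r2 c1 hr2 hc1
          by_cases e41 : r4 = r1
          · by_cases e42 : c4 = c2
            · exact hnf.2.1 (mkF2 pr12 pc12 (fun hh => e31 hh.symm) hc32.symm (cell c1 r1 hc1 hr1) (cell c2 r1 hc2 hr1) (cell c3 r1 hc3 hr1) (cell c1 r2 hc1 hr2) (cell c2 r2 hc2 hr2) (cell c3 r2 hc3 hr2) (by rw [H.sign_symm]; exact n1) (by rw [H.sign_symm, ← e42, ← e41]; exact n4) (by rw [H.sign_symm]; exact n2) (by rw [H.sign_symm]; exact n3'))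
            · by_cases e43 : c4 = c3
              · exact hnf.2.1 (mkF2 pr12 (fun hh => e31 hh.symm) pc12 hc32 (cell c1 r1 hc1 hr1) (cell c3 r1 hc3 hr1) (cell c2 r1 hc2 hr1) (cell c1 r2 hc1 hr2) (cell c3 r2 hc3 hr2) (cell c2 r2 hc2 hr2) (by rw [H.sign_symm]; exact n1) (by rw [H.sign_symm, ← e43, ← e41]; exact n4) (by rw [H.sign_symm]; exact n3') (by rw [H.sign_symm]; exact n2))
              · exact hnf.2.2.1 (mkF3 pr12 hc41.symm pc12 (fun hh => e31 hh.symm) e42 e43 hc32.symm (cell c1 r1 hc1 hr1) (cell c4 r1 hc4 hr1) (cell c2 r1 hc2 hr1) (cell c3 r1 hc3 hr1) (cell c1 r2 hc1 hr2) (cell c4 r2 hc4 hr2) (cell c2 r2 hc2 hr2) (cell c3 r2 hc3 hr2) (by rw [H.sign_symm]; exact n1) (by rw [H.sign_symm, ← e41]; exact n4) (by rw [H.sign_symm]; exact n2) (by rw [H.sign_symm]; exact n3'))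
          · by_cases e42 : c4 = c2
            · exact hnf.2.2.2.1 (mkF4 pr12 (fun hh => e41 hh.symm) (fun hh => hr42 hh.symm) (fun hh => e31 hh.symm) pc12 hc32 (cell c1 r1 hc1 hr1) (cell c3 r1 hc3 hr1) (cell c2 r1 hc2 hr1) (cell c1 r2 hc1 hr2) (cell c3 r2 hc3 hr2) (cell c2 r2 hc2 hr2) (cell c1 r4 hc1 hr4) (cell c3 r4 hc3 hr4) (cell c2 r4 hc2 hr4) (by rw [H.sign_symm]; exact n1) (by rw [H.sign_symm]; exact n3') (by rw [H.sign_symm, ← e42]; exact n4))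
            · by_cases e43 : c4 = c3
              · exact hnf.2.2.2.1 (mkF4 pr12 (fun hh => e41 hh.symm) (fun hh => hr42 hh.symm) pc12 (fun hh => e31 hh.symm) hc32.symm (cell c1 r1 hc1 hr1) (cell c2 r1 hc2 hr1) (cell c3 r1 hc3 hr1) (cell c1 r2 hc1 hr2) (cell c2 r2 hc2 hr2) (cell c3 r2 hc3 hr2) (cell c1 r4 hc1 hr4) (cell c2 r4 hc2 hr4) (cell c3 r4 hc3 hr4) (by rw [H.sign_symm]; exact n1) (by rw [H.sign_symm]; exact n2) (by rw [H.sign_symm, ← e43]; exact n4))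
              · exact hnf.2.2.2.1 (mkF4 pr12 (fun hh => e41 hh.symm) (fun hh => hr42 hh.symm) pc12 hc41.symm (fun hh => e42 hh.symm) (cell c1 r1 hc1 hr1) (cell c2 r1 hc2 hr1) (cell c4 r1 hc4 hr1) (cell c1 r2 hc1 hr2) (cell c2 r2 hc2 hr2) (cell c4 r2 hc4 hr2) (cell c1 r4 hc1 hr4) (cell c2 r4 hc2 hr4) (cell c4 r4 hc4 hr4) (by rw [H.sign_symm]; exact n1) (by rw [H.sign_symm]; exact n2) (by rw [H.sign_symm]; exact n4))
        · exact hnf.2.2.2.1 (mkF4 pr12 hr31.symm (fun hh => e32 hh.symm) pc12 (fun hh => e31 hh.symm) hc32.symm (cell c1 r1 hc1 hr1) (cell c2 r1 hc2 hr1) (cell c3 r1 hc3 hr1) (cell c1 r2 hc1 hr2) (cell c2 r2 hc2 hr2) (cell c3 r2 hc3 hr2) (cell c1 r3 hc1 hr3) (cell c2 r3 hc2 hr3) (cell c3 r3 hc3 hr3) (by rw [H.sign_symm]; exact n1) (by rw [H.sign_symm]; exact n2) (by rw [H.sign_symm]; exact n3))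

    -- otherwise: peel X0
    push_neg at hL1
    obtain ⟨γ₀, d₀, hγd₀adj, hγd₀sgn, hd₀σ, hd₀A⟩ := hL1
    set H' := H.deleteEdges {e | ∃ w, X0 w ∧ w ∈ e} with hH'def
    have hadjP : ∀ {a b : V}, H'.Adj a b ↔ H.Adj a b ∧ ¬ X0 a ∧ ¬ X0 b := fun {a b} => adj_delP
    have hd₀X0 : ¬ X0 d₀ := fun h => hd₀A h.2
    have hγ₀X0 : ¬ X0 γ₀ := by
      intro h
      exact (H.bipartite hγd₀adj) (by rw [h.1, hd₀σ])
    have hH'edge : H'.Adj d₀ γ₀ := hadjP.mpr ⟨hγd₀adj.symm, hd₀X0, hγ₀X0⟩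
    have hH'lt : (H'.graph.edgeSet).ncard < (H.graph.edgeSet).ncard := by
      refine edge_ncard_lt (e := s(x₀, a₀)) ((SimpleGraph.mem_edgeSet H.graph).mpr
        (mem_Ns.mp ha₀)) ?_
      exact ⟨x₀, hX0x₀, by simp⟩
    obtain ⟨u₀, v₀, hadj₀, hlm₀, hga₀⟩ := ih H' (by omega) (noSep_delP hns _) (NF_delP hnf _)
      hH'edge
    have horient : ∃ u v, H'.Adj u v ∧ H'.LocMin u v ∧ H'.GoodA u v ∧ H.side u = σ := by
      by_cases hsu : H.side u₀ = σ
      · exact ⟨u₀, v₀, hadj₀, hlm₀, hga₀, hsu⟩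
      · refine ⟨v₀, u₀, hadj₀.symm, hlm₀.symm', hga₀.symm', ?_⟩
        have h1 : H.side u₀ ≠ H.side v₀ := H'.bipartite hadj₀
        exact bool_eq_of_ne_ne h1.symm (fun hh => hsu hh.symm)
    obtain ⟨u, v, hadjuv, hlm', hga', huσ⟩ := horient
    have hWuv := hadjP.mp hadjuv
    have hvσ : H.side v ≠ σ := by
      rw [← huσ]
      exact (H.bipartite hWuv.1).symm
    have hNsu : H'.Ns u = H.Ns u := by
      ext c
      rw [mem_Ns, mem_Ns, hadjP]
      constructor
      · exact fun h => h.1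
      · intro h
        exact ⟨h, hWuv.2.1, fun hc => (H.bipartite h) (huσ.trans hc.1.symm)⟩
    -- lift or bad case
    by_cases hvA : v ∈ H.Ns x₀
    case neg =>
      have hNsv : H'.Ns v = H.Ns v := by
        ext r
        rw [mem_Ns, mem_Ns, hadjP]
        constructor
        · exact fun h => h.1
        · intro h
          refine ⟨h, hWuv.2.2, ?_⟩
          intro hr
          apply hvA
          rw [← hr.2]
          exact (H.memNs r v).mpr h.symm
      refine ⟨u, v, hWuv.1, ⟨hWuv.1, ?_, ?_⟩, ?_⟩
      · intro c hc r hr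
        have := hlm'.2.1 c (by rw [hNsu]; exact hc) (by rw [hNsv]; exact hr)
        exact Ns_del_subset H _ c this
      · intro d hd y hy
        have := hlm'.2.2 d (by rw [hNsv]; exact hd) (by rw [hNsu]; exact hy)
        exact Ns_del_subset H _ d this
      · intro c hc hcv d hd hdu
        exact hga' c (by rw [hNsu]; exact hc) hcv d (by rw [hNsv]; exact hd) hdu
    case pos =>
      set R' : V → Prop := fun r => H.side r = σ ∧ (H.Ns r).Nonempty ∧ H.Ns r ≠ H.Ns x₀
        with hR'def
      have hR'v : ∀ r, r ∈ H'.Ns v ↔ R' r := by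
        intro r
        rw [mem_Ns, hadjP]
        constructor
        · rintro ⟨h1, _, h3⟩
          have hS := (colS v hvA r).mp ((H.memNs v r).mpr h1)
          exact ⟨hS.1, hS.2, fun hh => h3 ⟨hS.1, hh⟩⟩
        · rintro ⟨h1, h2, h3⟩
          exact ⟨(H.memNs v r).mp ((colS v hvA r).mpr ⟨h1, h2⟩), hWuv.2.2, fun hh => h3 hh.2⟩
      have huR' : R' u := ⟨huσ, ⟨v, hWuv.1⟩, fun hh => hWuv.2.1 ⟨huσ, hh⟩⟩
      have umin : ∀ r, R' r → H.Ns u ⊆ H.Ns r := by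
        intro r hr
        have hsub := hlm'.2.2 r ((hR'v r).mpr hr)
        rw [hNsu] at hsub
        exact fun c hc => Ns_del_subset H _ r (hsub hc)
      have closure2 : ∀ c ∈ H.Ns u, ∀ r, R' r → r ∈ H.Ns c := by
        intro c hc r hr
        exact Ns_del_subset H _ c (hlm'.2.1 c (by rw [hNsu]; exact hc) ((hR'v r).mpr hr))
      have star : ∀ c ∈ H.Ns u, c ≠ v → ∀ d, R' d → d ≠ u → H.sign c d = true := by
        intro c hc hcv d hd hdu
        exact hga' c (by rw [hNsu]; exact hc) hcv d ((hR'v d).mpr hd) hdu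
      have hAsubA2 : H.Ns x₀ ⊆ H.Ns u := Amin u huσ ⟨v, hWuv.1⟩
      have AminR' : ∀ r, R' r → H.Ns x₀ ⊆ H.Ns r := fun r hr => Amin r hr.1 hr.2.1
      obtain ⟨η₀, hη₀, hη₀A⟩ := Set.exists_of_ssubset
        (ssubset_iff_subset_ne.mpr ⟨hAsubA2, fun hh => huR'.2.2 hh.symm⟩)
      have sideA2 : ∀ c ∈ H.Ns u, H.side c ≠ σ := by
        intro c hc
        rw [← huσ]
        exact (H.bipartite (mem_Ns.mp hc)).symm
      have adjA : ∀ c ∈ H.Ns x₀, ∀ r, R' r → H.Adj r c := by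
        intro c hc r hr
        exact (H.memNs r c).mp (AminR' r hr hc)
      have neX0R' : ∀ w r, X0 w → R' r → w ≠ r := by
        intro w r hw hr heq
        exact hr.2.2 (by rw [← heq]; exact hw.2)
      -- the bottom corner at u
      obtain ⟨v₂, hv₂mem, hlm₂⟩ := exists_locmin hns hWuv.1
      have hv₂A : v₂ ∉ H.Ns x₀ := by
        intro hv₂A
        have h1 : x₀ ∈ H.Ns v₂ := (colS v₂ hv₂A x₀).mpr ⟨hx₀σ, ⟨a₀, ha₀⟩⟩
        have h2 : x₀ ∈ H.Ns η₀ := hlm₂.2.1 η₀ hη₀ h1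
        exact hη₀A ((H.memNs x₀ η₀).mpr ((H.memNs η₀ x₀).mp h2).symm)
      by_cases hg2 : H.GoodA u v₂
      · exact ⟨u, v₂, mem_Ns.mp hv₂mem, hlm₂, hg2⟩
      obtain ⟨c', z, hc'A2, hc'v₂, hzv₂, hzu, hsgnc'z⟩ := goodA_neg hg2
      have hR'z : R' z := by
        refine ⟨bool_eq_of_ne_ne ((H.bipartite ((H.memNs v₂ z).mp hzv₂)).symm)
          (Ne.symm (sideA2 v₂ hv₂mem)), ⟨v₂, ((H.memNs v₂ z).mp hzv₂).symm⟩, ?_⟩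
        intro hNsz
        apply hv₂A
        rw [← hNsz]
        exact (H.memNs z v₂).mpr ((H.memNs v₂ z).mp hzv₂).symm
      have hc'v : c' = v := by
        by_contra hne
        have hh := star c' hc'A2 hne z hR'z hzu
        rw [hsgnc'z] at hh
        exact Bool.noConfusion hh
      rw [hc'v] at hsgnc'z
      have hzx₀ : x₀ ≠ z := neX0R' x₀ z hX0x₀ hR'z
      -- no negative row-u edge into A ∖ {v}
      by_cases hU : ∃ c₁, c₁ ∈ H.Ns x₀ ∧ c₁ ≠ v ∧ H.sign c₁ u = false
      · exfalso
        obtain ⟨c₁, hc₁, hc₁v, hsc₁⟩ := hU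
        refine hnf.2.2.2.2.1 (mkF5 (fun he => hWuv.2.1 (by rw [← he]; exact hX0x₀)) hzx₀ hzu.symm
          hc₁v (fun he => hη₀A (by rw [← he]; exact hc₁)) (fun he => hη₀A (by rw [← he]; exact hvA))
          (mem_Ns.mp hc₁) (mem_Ns.mp hvA) (fun h => hη₀A ((H.memNs x₀ η₀).mpr h))
          (mem_Ns.mp (hAsubA2 hc₁)) hWuv.1 (mem_Ns.mp hη₀)
          (adjA c₁ hc₁ z hR'z) (adjA v hvA z hR'z) ((H.memNs z η₀).mp (umin z hR'z hη₀))
          (by rw [H.sign_symm]; exact hsc₁) (by rw [H.sign_symm]; exact hsgnc'z))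
      have haveW : ∀ w, X0 w → ∃ ζ ξ, ζ ∈ H.Ns x₀ ∧ ζ ≠ v ∧ X0 ξ ∧ ξ ≠ w ∧
          H.sign ζ ξ = false := by
        intro w hw
        obtain ⟨c, d, hc, hcv, hdσ, hdne, hdw, hsgn⟩ := FAIL w v hw hvA
        by_cases hd : X0 d
        · exact ⟨c, d, hc, hcv, hd, hdw, hsgn⟩
        · exfalso
          have hR'd : R' d := ⟨hdσ, hdne, fun hh => hd ⟨hdσ, hh⟩⟩
          by_cases hdu : d = u
          · exact hU ⟨c, hc, hcv, hdu ▸ hsgn⟩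
          · have hh := star c (hAsubA2 hc) hcv d hR'd hdu
            rw [hsgn] at hh
            exact Bool.noConfusion hh
      obtain ⟨ζ1, ξ1, hζ1, hζ1v, hξ1, hξ1x₀, hs1⟩ := haveW x₀ hX0x₀
      obtain ⟨ζ2, ξ2, hζ2, hζ2v, hξ2, hξ2ξ1, hs2⟩ := haveW ξ1 hξ1
      have hξ1z : ξ1 ≠ z := neX0R' ξ1 z hξ1 hR'z
      have hξ2z : ξ2 ≠ z := neX0R' ξ2 z hξ2 hR'z
      by_cases hζeq : ζ1 = ζ2
      case neg =>
        exfalso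
        exact hnf.2.2.2.1 (mkF4 hξ2ξ1.symm hξ1z hξ2z hζeq hζ1v hζ2v
          (cell ζ1 ξ1 hζ1 hξ1) (cell ζ2 ξ1 hζ2 hξ1) (cell v ξ1 hvA hξ1)
          (cell ζ1 ξ2 hζ1 hξ2) (cell ζ2 ξ2 hζ2 hξ2) (cell v ξ2 hvA hξ2)
          (adjA ζ1 hζ1 z hR'z) (adjA ζ2 hζ2 z hR'z) (adjA v hvA z hR'z)
          (by rw [H.sign_symm]; exact hs1) (by rw [H.sign_symm]; exact hs2)
          (by rw [H.sign_symm]; exact hsgnc'z))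
      case pos =>
      rw [← hζeq] at hs2
      by_cases hz2 : ∃ z₂, R' z₂ ∧ z₂ ≠ z ∧ H.sign v z₂ = false
      · exfalso
        obtain ⟨z₂, hR'z₂, hz₂z, hsz₂⟩ := hz2
        exact hnf.2.2.1 (mkF3 hζ1v hξ2ξ1.symm hξ1z (neX0R' ξ1 z₂ hξ1 hR'z₂)
          hξ2z (neX0R' ξ2 z₂ hξ2 hR'z₂) hz₂z.symm
          (cell ζ1 ξ1 hζ1 hξ1).symm (cell ζ1 ξ2 hζ1 hξ2).symm
          (adjA ζ1 hζ1 z hR'z).symm (adjA ζ1 hζ1 z₂ hR'z₂).symm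
          (cell v ξ1 hvA hξ1).symm (cell v ξ2 hvA hξ2).symm
          (adjA v hvA z hR'z).symm (adjA v hvA z₂ hR'z₂).symm
          hs1 hs2 hsgnc'z hsz₂)
      have uniq : ∀ r, R' r → H.sign v r = false → r = z := by
        intro r hr hs
        by_contra hne
        exact hz2 ⟨r, hr, hne, hs⟩
      by_cases hNz : H.Ns z ⊆ H.Ns u
      · -- two-level case
        have hNzEq : H.Ns z = H.Ns u := Set.Subset.antisymm hNz (umin z hR'z)
        have rowsR' : ∀ η, η ∈ H.Ns u → η ∉ H.Ns x₀ → ∀ r, r ∈ H.Ns η → R' r := by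
          intro η hη hηA r hr
          have hrσ : H.side r = σ := bool_eq_of_ne_ne
            ((H.bipartite ((H.memNs η r).mp hr)).symm) (Ne.symm (sideA2 η hη))
          refine ⟨hrσ, ⟨η, ((H.memNs η r).mp hr).symm⟩, ?_⟩
          intro hh
          apply hηA
          rw [← hh]
          exact (H.memNs r η).mpr ((H.memNs η r).mp hr).symm
        have lmzη : ∀ η, η ∈ H.Ns u → η ∉ H.Ns x₀ → H.LocMin z η := by
          intro η hη hηA
          have hadjzη : H.Adj z η := by
            rw [← mem_Ns, hNzEq]
            exact hη
          refine ⟨hadjzη, ?_, ?_⟩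
          · intro c hc r hr
            have hcu : c ∈ H.Ns u := by rw [← hNzEq]; exact hc
            exact closure2 c hcu r (rowsR' η hη hηA r hr)
          · intro r hr
            rw [hNzEq]
            exact umin r (rowsR' η hη hηA r hr)
        by_cases hgz2 : H.GoodA z v₂
        · exact ⟨z, v₂, (lmzη v₂ hv₂mem hv₂A).1, lmzη v₂ hv₂mem hv₂A, hgz2⟩
        obtain ⟨c, r, hc, hcv₂, hrv₂, hrz, hsr⟩ := goodA_neg hgz2
        have hcA2 : c ∈ H.Ns u := by rw [← hNzEq]; exact hc
        have hR'r : R' r := rowsR' v₂ hv₂mem hv₂A r hrv₂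
        have hcvv : c ≠ v := by
          intro he
          rw [he] at hsr
          exact hrz (uniq r hR'r hsr)
        have hcA : c ∉ H.Ns x₀ := by
          intro hcA
          by_cases hru : r = u
          · exact hU ⟨c, hcA, hcvv, by rw [← hru]; exact hsr⟩
          · have hh := star c hcA2 hcvv r hR'r hru
            rw [hsr] at hh
            exact Bool.noConfusion hh
        have hru : r = u := by
          by_contra hru
          have hh := star c hcA2 hcvv r hR'r hru
          rw [hsr] at hh
          exact Bool.noConfusion hh
        rw [hru] at hsr
        by_cases hgz3 : H.GoodA z c
        · exact ⟨z, c, (lmzη c hcA2 hcA).1, lmzη c hcA2 hcA, hgz3⟩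
        obtain ⟨c2, r2, hc2, hc2c, hr2c, hr2z, hsr2⟩ := goodA_neg hgz3
        have hc2A2 : c2 ∈ H.Ns u := by rw [← hNzEq]; exact hc2
        have hR'r2 : R' r2 := rowsR' c hcA2 hcA r2 hr2c
        have hc2v : c2 ≠ v := by
          intro he
          rw [he] at hsr2
          exact hr2z (uniq r2 hR'r2 hsr2)
        have hc2A : c2 ∉ H.Ns x₀ := by
          intro hc2A
          by_cases hr2u : r2 = u
          · exact hU ⟨c2, hc2A, hc2v, by rw [← hr2u]; exact hsr2⟩
          · have hh := star c2 hc2A2 hc2v r2 hR'r2 hr2u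
            rw [hsr2] at hh
            exact Bool.noConfusion hh
        have hr2u : r2 = u := by
          by_contra hr2u
          have hh := star c2 hc2A2 hc2v r2 hR'r2 hr2u
          rw [hsr2] at hh
          exact Bool.noConfusion hh
        rw [hr2u] at hsr2
        exfalso
        refine hnf.2.2.2.2.2 (mkF6 hξ2ξ1.symm hzu hζ1v hc2c.symm
          hξ1z (fun he => hWuv.2.1 (by rw [← he]; exact hξ1)) hξ2z (fun he => hWuv.2.1 (by rw [← he]; exact hξ2))
          (fun he => hcA (by rw [← he]; exact hζ1)) (fun he => hc2A (by rw [← he]; exact hζ1))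
          (fun he => hcvv he.symm) (fun he => hc2v he.symm)
          (cell ζ1 ξ1 hζ1 hξ1) (cell v ξ1 hvA hξ1)
          (fun h => hcA (by rw [← hξ1.2]; exact (H.memNs ξ1 c).mpr h))
          (fun h => hc2A (by rw [← hξ1.2]; exact (H.memNs ξ1 c2).mpr h))
          (cell ζ1 ξ2 hζ1 hξ2) (cell v ξ2 hvA hξ2)
          (fun h => hcA (by rw [← hξ2.2]; exact (H.memNs ξ2 c).mpr h))
          (fun h => hc2A (by rw [← hξ2.2]; exact (H.memNs ξ2 c2).mpr h))
          (adjA ζ1 hζ1 z hR'z) (adjA v hvA z hR'z)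
          ((H.memNs z c).mp hc) ((H.memNs z c2).mp hc2)
          ((H.memNs u ζ1).mp (hAsubA2 hζ1)) hWuv.1
          ((H.memNs u c).mp hcA2) ((H.memNs u c2).mp hc2A2)
          (by rw [H.sign_symm]; exact hs1) (by rw [H.sign_symm]; exact hs2)
          (by rw [H.sign_symm]; exact hsgnc'z)
          (by rw [H.sign_symm]; exact hsr) (by rw [H.sign_symm]; exact hsr2))
      · -- the high case
        obtain ⟨w₃, hw₃z, hw₃u⟩ := Set.not_subset.mp hNz
        have hadjzv : H.Adj z v := adjA v hvA z hR'z
        obtain ⟨v₃, hv₃z, hlm₃⟩ := exists_locmin hns hadjzv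
        have hv₃A2 : v₃ ∉ H.Ns u := by
          intro hv₃A2
          have h1 : u ∈ H.Ns v₃ := (H.memNs v₃ u).mpr ((H.memNs u v₃).mp hv₃A2).symm
          have h2 : u ∈ H.Ns w₃ := hlm₃.2.1 w₃ hw₃z h1
          exact hw₃u ((H.memNs u w₃).mpr ((H.memNs w₃ u).mp h2).symm)
        by_cases hgz3 : H.GoodA z v₃
        · exact ⟨z, v₃, mem_Ns.mp hv₃z, hlm₃, hgz3⟩
        obtain ⟨γ, δ, hγz, hγv₃, hδv₃, hδz, hsγδ⟩ := goodA_neg hgz3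
        have sv₃ : H.side v₃ ≠ σ := by
          rw [← hR'z.1]
          exact (H.bipartite ((H.memNs z v₃).mp hv₃z)).symm
        have sγ : H.side γ ≠ σ := by
          rw [← hR'z.1]
          exact (H.bipartite ((H.memNs z γ).mp hγz)).symm
        have hNszδ : H.Ns z ⊆ H.Ns δ := hlm₃.2.2 δ hδv₃
        have hδu : δ ≠ u := by
          intro he
          apply hv₃A2
          rw [← he]
          exact (H.memNs δ v₃).mpr ((H.memNs v₃ δ).mp hδv₃).symm
        have hδσ : H.side δ = σ := bool_eq_of_ne_ne
          ((H.bipartite ((H.memNs v₃ δ).mp hδv₃)).symm) (Ne.symm sv₃)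
        have hR'δ : R' δ := by
          refine ⟨hδσ, ⟨v₃, ((H.memNs v₃ δ).mp hδv₃).symm⟩, ?_⟩
          intro hh
          apply hv₃A2
          apply hAsubA2
          rw [← hh]
          exact (H.memNs δ v₃).mpr ((H.memNs v₃ δ).mp hδv₃).symm
        have hγv : γ ≠ v := by
          intro he
          rw [he] at hsγδ
          exact hδz (uniq δ hR'δ hsγδ)
        have hγA2 : γ ∉ H.Ns u := by
          intro hγA2
          have hh := star γ hγA2 hγv δ hR'δ hδu
          rw [hsγδ] at hh
          exact Bool.noConfusion hh
        have hγnA : γ ∉ H.Ns x₀ := fun hh => hγA2 (hAsubA2 hh)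
        have hδvmem : v ∈ H.Ns δ := AminR' δ hR'δ hvA
        by_cases hρ : ∀ r ∈ H.Ns γ, H.Ns z ⊆ H.Ns r
        case neg =>
          exfalso
          push_neg at hρ
          obtain ⟨r₀, hr₀γ, hnsub⟩ := hρ
          obtain ⟨y3, hy3z, hy3r₀⟩ := Set.not_subset.mp hnsub
          have hr₀σ : H.side r₀ = σ := bool_eq_of_ne_ne
            ((H.bipartite ((H.memNs γ r₀).mp hr₀γ)).symm) (Ne.symm sγ)
          have hγr₀mem : γ ∈ H.Ns r₀ := (H.memNs r₀ γ).mpr ((H.memNs γ r₀).mp hr₀γ).symm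
          have hvr₀ : v ∈ H.Ns r₀ := Amin r₀ hr₀σ ⟨γ, ((H.memNs γ r₀).mp hr₀γ).symm⟩ hvA
          refine hnf.2.2.2.2.1 (mkF5 (fun he => hnsub (by rw [he]))
            (fun he => hnsub (by rw [he]; exact hNszδ)) hδz.symm
            hγv.symm (fun he => hy3r₀ (by rw [← he]; exact hvr₀)) (fun he => hy3r₀ (by rw [← he]; exact hγr₀mem))
            ((H.memNs r₀ v).mp hvr₀) ((H.memNs r₀ γ).mp hγr₀mem)
            (fun h => hy3r₀ ((H.memNs r₀ y3).mpr h))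
            hadjzv ((H.memNs z γ).mp hγz) ((H.memNs z y3).mp hy3z)
            ((H.memNs δ v).mp hδvmem) ((H.memNs δ γ).mp (hNszδ hγz))
            ((H.memNs δ y3).mp (hNszδ hy3z))
            (by rw [H.sign_symm]; exact hsgnc'z) (by rw [H.sign_symm]; exact hsγδ))
        case pos =>
          have lmzγ : H.LocMin z γ := by
            refine ⟨(H.memNs z γ).mp hγz, ?_, hρ⟩
            intro c hc r hr
            exact (H.memNs c r).mpr ((H.memNs r c).mp (hρ r hr hc)).symm
          by_cases hgz4 : H.GoodA z γ
          · exact ⟨z, γ, (H.memNs z γ).mp hγz, lmzγ, hgz4⟩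
          obtain ⟨c₂, r₂, hc₂z, hc₂γ, hr₂γ, hr₂z, hsc₂r₂⟩ := goodA_neg hgz4
          have hP2 : H.Ns z ⊆ H.Ns r₂ := hρ r₂ hr₂γ
          have hr₂u : r₂ ≠ u := by
            intro he
            apply hw₃u
            rw [← he]
            exact hP2 hw₃z
          have hγr₂mem : γ ∈ H.Ns r₂ := (H.memNs r₂ γ).mpr ((H.memNs γ r₂).mp hr₂γ).symm
          have hr₂σ : H.side r₂ = σ := bool_eq_of_ne_ne
            ((H.bipartite ((H.memNs γ r₂).mp hr₂γ)).symm) (Ne.symm sγ)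
          have hR'r₂ : R' r₂ := by
            refine ⟨hr₂σ, ⟨γ, ((H.memNs γ r₂).mp hr₂γ).symm⟩, ?_⟩
            intro hh
            apply hγnA
            rw [← hh]
            exact hγr₂mem
          have hc₂v : c₂ ≠ v := by
            intro he
            rw [he] at hsc₂r₂
            exact hr₂z (uniq r₂ hR'r₂ hsc₂r₂)
          have hc₂A2 : c₂ ∉ H.Ns u := by
            intro hc₂A2
            have hh := star c₂ hc₂A2 hc₂v r₂ hR'r₂ hr₂u
            rw [hsc₂r₂] at hh
            exact Bool.noConfusion hh
          have hc₂nA : c₂ ∉ H.Ns x₀ := fun hh => hc₂A2 (hAsubA2 hh)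
          exfalso
          by_cases hr₂δ : r₂ = δ
          · rw [hr₂δ] at hsc₂r₂
            refine hnf.2.2.2.2.2 (mkF6 hξ2ξ1.symm hδz.symm hζ1v hc₂γ.symm
              hξ1z (neX0R' ξ1 δ hξ1 hR'δ) hξ2z (neX0R' ξ2 δ hξ2 hR'δ)
              (fun he => hγnA (by rw [← he]; exact hζ1)) (fun he => hc₂nA (by rw [← he]; exact hζ1))
              (fun he => hγv he.symm) (fun he => hc₂v he.symm)
              (cell ζ1 ξ1 hζ1 hξ1) (cell v ξ1 hvA hξ1)
              (fun h => hγnA (by rw [← hξ1.2]; exact (H.memNs ξ1 γ).mpr h))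
              (fun h => hc₂nA (by rw [← hξ1.2]; exact (H.memNs ξ1 c₂).mpr h))
              (cell ζ1 ξ2 hζ1 hξ2) (cell v ξ2 hvA hξ2)
              (fun h => hγnA (by rw [← hξ2.2]; exact (H.memNs ξ2 γ).mpr h))
              (fun h => hc₂nA (by rw [← hξ2.2]; exact (H.memNs ξ2 c₂).mpr h))
              (adjA ζ1 hζ1 z hR'z) hadjzv ((H.memNs z γ).mp hγz) ((H.memNs z c₂).mp hc₂z)
              ((H.memNs δ ζ1).mp (AminR' δ hR'δ hζ1)) ((H.memNs δ v).mp hδvmem)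
              ((H.memNs δ γ).mp (hNszδ hγz)) ((H.memNs δ c₂).mp (hNszδ hc₂z))
              (by rw [H.sign_symm]; exact hs1) (by rw [H.sign_symm]; exact hs2)
              (by rw [H.sign_symm]; exact hsgnc'z)
              (by rw [H.sign_symm]; exact hsγδ) (by rw [H.sign_symm]; exact hsc₂r₂))
          · refine hnf.2.2.2.1 (mkF4 hδz.symm hr₂z.symm (fun he => hr₂δ he.symm)
              hγv.symm (fun he => hc₂v he.symm) hc₂γ.symm
              hadjzv ((H.memNs z γ).mp hγz) ((H.memNs z c₂).mp hc₂z)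
              ((H.memNs δ v).mp hδvmem) ((H.memNs δ γ).mp (hNszδ hγz))
              ((H.memNs δ c₂).mp (hNszδ hc₂z))
              ((H.memNs r₂ v).mp (AminR' r₂ hR'r₂ hvA)) ((H.memNs r₂ γ).mp hγr₂mem)
              ((H.memNs r₂ c₂).mp (hP2 hc₂z))
              (by rw [H.sign_symm]; exact hsgnc'z) (by rw [H.sign_symm]; exact hsγδ)
              (by rw [H.sign_symm]; exact hsc₂r₂))



theorem rev_main [Fintype V] : ∀ (n : ℕ) (G : SignedBigraph V),
    (G.graph.edgeSet).ncard ≤ n →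
    ¬ IsSeparableGraph G.graph → G.NF → G.IsChordal := by
  intro n
  induction n with
  | zero =>
    intro G hle hns hnf
    have hE : G.graph.edgeSet = ∅ :=
      (Set.ncard_eq_zero (Set.toFinite _)).mp (le_antisymm hle (Nat.zero_le _))
    refine ⟨[], List.nodup_nil, ?_, ?_⟩
    · intro e; simp [hE]
    · intro i hi; simp at hi
  | succ n ih =>
    intro G hle hns hnf
    by_cases hE : G.graph.edgeSet = ∅
    · refine ⟨[], List.nodup_nil, ?_, ?_⟩
      · intro e; simp [hE]
      · intro i hi; simp at hi
    · have hne : G.graph.edgeSet.Nonempty := Set.nonempty_iff_ne_empty.mpr hE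
      have hadj' : ∃ p' q' : V, G.Adj p' q' := by
        obtain ⟨e, he⟩ := hne
        induction e using Sym2.ind with
        | _ p' q' => exact ⟨p', q', (SimpleGraph.mem_edgeSet G.graph).mp he⟩
      obtain ⟨p', q', hpq⟩ := hadj'
      obtain ⟨u, v, hadj, hlm, hga⟩ :=
        bigclaim (n + 1) G hle hns hnf hpq
      have hlt : ((G.deleteEdges {s(u, v)}).graph.edgeSet).ncard < G.graph.edgeSet.ncard :=
        edge_ncard_lt ((SimpleGraph.mem_edgeSet G.graph).mpr hadj) rfl
      exact isChordal_cons hadj (signedSimplicial_of hlm hga)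
        (ih (G.deleteEdges {s(u, v)}) (by omega) (noSep_deleteEdge hns hlm)
          (NF_delE hnf hlm hga))

end SignedBigraph

open SignedBigraph in
theorem signedNonseparableBigraph_isChordal_iff'
    {V : Type u} [Fintype V] (G : SignedBigraph V)
    (hns : ¬ IsSeparableGraph G.graph) :
    G.IsChordal ↔
      ¬ (G.HasF1 ∨ G.HasF2 ∨ G.HasF3 ∨ G.HasF4 ∨ G.HasF5 ∨ G.HasF6) := by
  constructor
  · intro hC hor
    rcases hor with h | h | h | h | h | h
    exacts [chordal_no_F1 hC h, chordal_no_F2 hC h, chordal_no_F3 hC h,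
      chordal_no_F4 hC h, chordal_no_F5 hC h, chordal_no_F6 hC h]
  · intro hfree
    exact rev_main _ G le_rfl hns
      ⟨fun h => hfree (Or.inl h), fun h => hfree (Or.inr (Or.inl h)),
       fun h => hfree (Or.inr (Or.inr (Or.inl h))),
       fun h => hfree (Or.inr (Or.inr (Or.inr (Or.inl h)))),
       fun h => hfree (Or.inr (Or.inr (Or.inr (Or.inr (Or.inl h))))),
       fun h => hfree (Or.inr (Or.inr (Or.inr (Or.inr (Or.inr h)))))⟩

open SignedBigraph in
/-- Theorem 3.2: a signed non-separable bigraph is chordal iff it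
contains no member of `F₁ ∪ F₂ ∪ F₃ ∪ F₄ ∪ F₅ ∪ F₆` as an induced subgraph. -/
theorem signedNonseparableBigraph_isChordal_iff
    {V : Type u} [Fintype V] (G : SignedBigraph V)
    (hns : ¬ IsSeparableGraph G.graph) :
    G.IsChordal ↔
      ¬ (G.HasF1 ∨ G.HasF2 ∨ G.HasF3 ∨ G.HasF4 ∨ G.HasF5 ∨ G.HasF6) :=
  signedNonseparableBigraph_isChordal_iff' G hns
end

section
/- Let Ĝ be a signed separable bigraph which does not contain any graph of 𝒞 ∪ D as an induced subgraph, and suppose a vertex set S minimally separates non-trivial components H and H' of Ĝ − S. Then S induces a positive biclique in Ĝ, and any two vertices of S lying in the same partite set of Ĝ have a common neighbour in H and a common neighbour in H'. -/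
universe u

section AuxProofs

open SimpleGraph SignedBigraph

private lemma dist_le_adj' {V : Type u} (K : SimpleGraph V) {a u v : V}
    (hr : K.Reachable a u) (h : K.Adj u v) : K.dist a v ≤ K.dist a u + 1 := by
  obtain ⟨p, hp⟩ := hr.exists_walk_length_eq_dist
  have := SimpleGraph.dist_le (p.concat h)
  rwa [SimpleGraph.Walk.length_concat, hp] at this

private lemma exists_pred' {V : Type u} (K : SimpleGraph V) {a v : V}
    (hr : K.Reachable a v) (hd : 0 < K.dist a v) :
    ∃ u, K.Adj u v ∧ K.Reachable a u ∧ K.dist a u + 1 = K.dist a v := by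
  obtain ⟨p, hp⟩ := hr.exists_walk_length_eq_dist
  have hva : v ≠ a := by
    intro h
    subst h
    simp [SimpleGraph.dist_self] at hd
  obtain ⟨u, hadj, q, hq⟩ := SimpleGraph.Walk.exists_eq_cons_of_ne hva p.reverse
  have hlen : q.length + 1 = K.dist a v := by
    have h2 := congrArg SimpleGraph.Walk.length hq
    rw [SimpleGraph.Walk.length_reverse] at h2
    simp only [SimpleGraph.Walk.length_cons] at h2
    omega
  refine ⟨u, hadj.symm, ⟨q.reverse⟩, ?_⟩
  have h1 : K.dist a u ≤ q.length := by
    simpa [SimpleGraph.Walk.length_reverse] using SimpleGraph.dist_le q.reverse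
  have h2 : K.dist a v ≤ K.dist a u + 1 := dist_le_adj' K ⟨q.reverse⟩ hadj.symm
  omega

private lemma exists_level_path' {V : Type u} (K : SimpleGraph V) (a : V) :
    ∀ m, ∀ v, K.Reachable a v → K.dist a v = m →
      ∃ f : ℕ → V, f 0 = a ∧ f m = v ∧ (∀ i ≤ m, K.Reachable a (f i) ∧ K.dist a (f i) = i) ∧
        (∀ i, i < m → K.Adj (f i) (f (i + 1))) := by
  intro m
  induction m with
  | zero =>
    intro v hr hd
    have hav : a = v := hr.dist_eq_zero_iff.mp hd
    subst hav
    refine ⟨fun _ => a, rfl, rfl, ?_, fun i hi => absurd hi (by omega)⟩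
    intro i hi
    have : i = 0 := by omega
    subst this
    exact ⟨SimpleGraph.Reachable.refl a, SimpleGraph.dist_self⟩
  | succ k ih =>
    intro v hr hd
    obtain ⟨u, hadj, hru, hdu⟩ := exists_pred' K hr (by omega)
    have hdu' : K.dist a u = k := by omega
    obtain ⟨f, hf0, hfk, hflev, hfadj⟩ := ih u hru hdu'
    refine ⟨fun i => if i ≤ k then f i else v, ?_, ?_, ?_, ?_⟩
    · simp [hf0]
    · dsimp only
      rw [if_neg (by omega)]
    · intro i hi
      dsimp only
      by_cases h : i ≤ k
      · rw [if_pos h]; exact hflev i h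
      · have hik : i = k + 1 := by omega
        subst hik
        rw [if_neg (by omega)]
        exact ⟨hr, hd⟩
    · intro i hi
      dsimp only
      rcases Nat.lt_or_ge i k with h | h
      · rw [if_pos (by omega), if_pos (by omega)]
        exact hfadj i h
      · have hik : i = k := by omega
        subst hik
        rw [if_pos le_rfl, if_neg (by omega), hfk]
        exact hadj

private lemma exists_induced_path' {V : Type u} (K : SimpleGraph V) {a b : V}
    (hr : K.Reachable a b) (hne : a ≠ b) :
    ∃ m, ∃ f : ℕ → V, 1 ≤ m ∧ f 0 = a ∧ f m = b ∧
      (∀ i ≤ m, ∀ j ≤ m, f i = f j → i = j) ∧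
      (∀ i, i < m → K.Adj (f i) (f (i + 1))) ∧
      (∀ i ≤ m, ∀ j ≤ m, K.Adj (f i) (f j) → (j = i + 1 ∨ i = j + 1)) := by
  obtain ⟨f, hf0, hfm, hlev, hstep⟩ := exists_level_path' K a (K.dist a b) b hr rfl
  have hm1 : 1 ≤ K.dist a b := hr.pos_dist_of_ne hne
  refine ⟨K.dist a b, f, hm1, hf0, hfm, ?_, hstep, ?_⟩
  · intro i hi j hj h
    have h1 := (hlev i hi).2
    have h2 := (hlev j hj).2
    rw [h] at h1
    exact h1.symm.trans h2
  · intro i hi j hj hA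
    have h1 : K.dist a (f j) ≤ K.dist a (f i) + 1 := dist_le_adj' K (hlev i hi).1 hA
    have h2 : K.dist a (f i) ≤ K.dist a (f j) + 1 := dist_le_adj' K (hlev j hj).1 hA.symm
    have hne' : i ≠ j := by
      intro h
      subst h
      exact K.loopless.irrefl _ hA
    rw [(hlev i hi).2, (hlev j hj).2] at h1 h2
    omega


private lemma hasLongInducedCycle_of' {V : Type u} (G : SimpleGraph V) (n : ℕ) (hn : 6 ≤ n)
    (c : ℕ → V)
    (hinj : ∀ i, i < n → ∀ j, j < n → c i = c j → i = j)
    (hadj : ∀ i, i < n → ∀ j, j < n →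
      (G.Adj (c i) (c j) ↔
        ((j = i + 1 ∨ (i + 1 = n ∧ j = 0)) ∨ (i = j + 1 ∨ (j + 1 = n ∧ i = 0))))) :
    ∃ n : ℕ, 6 ≤ n ∧ ∃ f : ZMod n → V, Function.Injective f ∧
      ∀ i j : ZMod n, G.Adj (f i) (f j) ↔ (j = i + 1 ∨ i = j + 1) := by
  haveI : NeZero n := ⟨by omega⟩
  haveI : Fact (1 < n) := ⟨by omega⟩
  have hsucc : ∀ x : ZMod n, (x + 1).val = (x.val + 1) % n := by
    intro x
    rw [ZMod.val_add, ZMod.val_one]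
  have hval : ∀ x y : ZMod n, y = x + 1 ↔ (y.val = x.val + 1 ∨ (x.val + 1 = n ∧ y.val = 0)) := by
    intro x y
    constructor
    · rintro rfl
      rw [hsucc]
      have hx := ZMod.val_lt x
      rcases Nat.lt_or_ge (x.val + 1) n with h | h
      · left; exact Nat.mod_eq_of_lt h
      · right
        have hxn : x.val + 1 = n := by omega
        refine ⟨hxn, ?_⟩
        rw [hxn, Nat.mod_self]
    · intro h
      apply ZMod.val_injective n
      rw [hsucc]
      rcases h with h | ⟨h1, h2⟩
      · have hlt : x.val + 1 < n := by have := ZMod.val_lt y; omega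
        rw [Nat.mod_eq_of_lt hlt]; exact h
      · rw [h1, Nat.mod_self]; exact h2
  refine ⟨n, hn, fun i => c i.val, ?_, ?_⟩
  · intro i j h
    exact ZMod.val_injective n (hinj _ (ZMod.val_lt i) _ (ZMod.val_lt j) h)
  · intro i j
    rw [hadj _ (ZMod.val_lt i) _ (ZMod.val_lt j), hval i j, hval j i]

private lemma glue_cycle' {V : Type u} (G : SimpleGraph V) (m m' : ℕ) (f f' : ℕ → V)
    (hm : 2 ≤ m) (hm' : 2 ≤ m') (h6 : 6 ≤ m + m')
    (h0 : f 0 = f' 0) (hend : f m = f' m')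
    (hinj : ∀ i ≤ m, ∀ j ≤ m, f i = f j → i = j)
    (hinj' : ∀ i ≤ m', ∀ j ≤ m', f' i = f' j → i = j)
    (hcne : ∀ i, 0 < i → i < m → ∀ j, 0 < j → j < m' → f i ≠ f' j)
    (hadj : ∀ i ≤ m, ∀ j ≤ m, (G.Adj (f i) (f j) ↔ (j = i + 1 ∨ i = j + 1)))
    (hadj' : ∀ i ≤ m', ∀ j ≤ m', (G.Adj (f' i) (f' j) ↔ (j = i + 1 ∨ i = j + 1)))
    (hcadj : ∀ i, 0 < i → i < m → ∀ j, 0 < j → j < m' → ¬ G.Adj (f i) (f' j)) :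
    ∃ n : ℕ, 6 ≤ n ∧ ∃ g : ZMod n → V, Function.Injective g ∧
      ∀ i j : ZMod n, G.Adj (g i) (g j) ↔ (j = i + 1 ∨ i = j + 1) := by
  set n := m + m' with hn
  set c : ℕ → V := fun i => if i ≤ m then f i else f' (n - i) with hc
  have hcle : ∀ i, i ≤ m → c i = f i := fun i h => if_pos h
  have hcgt : ∀ i, m < i → c i = f' (n - i) := fun i h => if_neg (by omega)
  -- mixed-equality helper: c i = f' t with i ≤ m never holds for 0 < t < m' unless matching ends
  have hmix : ∀ i, i ≤ m → ∀ j, m < j → j < n → f i = f' (n - j) → False := by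
    intro i hi j hj1 hj2 h
    rcases Nat.eq_zero_or_pos i with rfl | hi0
    · rw [h0] at h
      have := hinj' 0 (by omega) (n - j) (by omega) h
      omega
    · rcases Nat.lt_or_ge i m with him | him
      · exact hcne i hi0 him (n - j) (by omega) (by omega) h
      · have : i = m := by omega
        subst this
        rw [hend] at h
        have := hinj' m' le_rfl (n - j) (by omega) h
        omega
  -- mixed adjacency characterization
  have hmixadj : ∀ i, i ≤ m → ∀ j, m < j → j < n →
      (G.Adj (c i) (c j) ↔
        ((j = i + 1 ∨ (i + 1 = n ∧ j = 0)) ∨ (i = j + 1 ∨ (j + 1 = n ∧ i = 0)))) := by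
    intro i hi j hj1 hj2
    rw [hcle i hi, hcgt j hj1]
    rcases Nat.eq_zero_or_pos i with rfl | hi0
    · rw [h0, hadj' 0 (by omega) (n - j) (by omega)]
      constructor
      · intro h; omega
      · intro h; omega
    · rcases Nat.lt_or_ge i m with him | him
      · exact iff_of_false (hcadj i hi0 him (n - j) (by omega) (by omega)) (by omega)
      · have : i = m := by omega
        subst this
        rw [hend, hadj' m' le_rfl (n - j) (by omega)]
        constructor
        · intro h; omega
        · intro h; omega
  apply hasLongInducedCycle_of' G n h6 c
  · intro i hi j hj h
    rcases le_or_gt i m with h1 | h1 <;> rcases le_or_gt j m with h2 | h2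
    · rw [hcle i h1, hcle j h2] at h
      exact hinj i h1 j h2 h
    · rw [hcle i h1, hcgt j h2] at h
      exact absurd h (fun h => hmix i h1 j h2 hj h)
    · rw [hcgt i h1, hcle j h2] at h
      exact absurd h.symm (fun h => hmix j h2 i h1 hi h)
    · rw [hcgt i h1, hcgt j h2] at h
      have := hinj' (n - i) (by omega) (n - j) (by omega) h
      omega
  · intro i hi j hj
    rcases le_or_gt i m with h1 | h1 <;> rcases le_or_gt j m with h2 | h2
    · rw [hcle i h1, hcle j h2, hadj i h1 j h2]
      constructor
      · intro h; omega
      · intro h; omega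
    · rw [hmixadj i h1 j h2 hj]
    · rw [G.adj_comm, hmixadj j h2 i h1 hi]
      constructor
      · intro h; omega
      · intro h; omega
    · rw [hcgt i h1, hcgt j h2, hadj' (n - i) (by omega) (n - j) (by omega)]
      constructor
      · intro h; omega
      · intro h; omega

private def auxG' {V : Type u} (G : SimpleGraph V) (a b : V) (T : Set V) : SimpleGraph V where
  Adj u v := G.Adj u v ∧ (u = a ∨ u = b ∨ u ∈ T) ∧ (v = a ∨ v = b ∨ v ∈ T) ∧
    ¬(u = a ∧ v = b) ∧ ¬(u = b ∧ v = a)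
  symm := ⟨by
    rintro u v ⟨h1, h2, h3, h4, h5⟩
    exact ⟨h1.symm, h3, h2, fun hc => h5 ⟨hc.2, hc.1⟩, fun hc => h4 ⟨hc.2, hc.1⟩⟩⟩
  loopless := ⟨fun v h => G.loopless.irrefl v h.1⟩

private lemma comp_path' {V : Type u} (G : SignedBigraph V) (S : Set V) {a b : V} (T : Set V)
    (hT : IsNontrivialComponentOf G.graph S T)
    (ha : a ∈ S) (hb : b ∈ S) (hab : a ≠ b)
    (haT : ∃ h ∈ T, G.graph.Adj a h) (hbT : ∃ h ∈ T, G.graph.Adj b h) :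
    ∃ m, ∃ f : ℕ → V, 2 ≤ m ∧ f 0 = a ∧ f m = b ∧
      (∀ i, 0 < i → i < m → f i ∈ T) ∧
      (∀ i ≤ m, ∀ j ≤ m, f i = f j → i = j) ∧
      (∀ i ≤ m, ∀ j ≤ m, (G.graph.Adj (f i) (f j) ↔
        (j = i + 1 ∨ i = j + 1 ∨
          (G.graph.Adj a b ∧ ((i = 0 ∧ j = m) ∨ (i = m ∧ j = 0)))))) := by
  set K := auxG' G.graph a b T with hK
  have haT' : a ∉ T := fun h => (hT.1 h) ha
  have hbT' : b ∉ T := fun h => (hT.1 h) hb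
  obtain ⟨h1v, h1T, h1adj⟩ := haT
  obtain ⟨h2v, h2T, h2adj⟩ := hbT
  have hKa : K.Adj a h1v :=
    ⟨h1adj, Or.inl rfl, Or.inr (Or.inr h1T), fun hc => hbT' (hc.2 ▸ h1T), fun hc => hab hc.1⟩
  have hKb : K.Adj b h2v :=
    ⟨h2adj, Or.inr (Or.inl rfl), Or.inr (Or.inr h2T), fun hc => hab hc.1.symm,
      fun hc => haT' (hc.2 ▸ h2T)⟩
  have hreach : K.Reachable h1v h2v := by
    let φ : G.graph.induce T →g K := ⟨fun x => x.val, by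
      rintro ⟨u, hu⟩ ⟨v, hv⟩ huv
      exact ⟨huv, Or.inr (Or.inr hu), Or.inr (Or.inr hv),
        fun hc => haT' (hc.1 ▸ hu), fun hc => hbT' (hc.1 ▸ hu)⟩⟩
    exact SimpleGraph.Reachable.map φ (hT.2.1.preconnected ⟨h1v, h1T⟩ ⟨h2v, h2T⟩)
  have hr : K.Reachable a b := (hKa.reachable).trans (hreach.trans hKb.reachable.symm)
  obtain ⟨m, f, hm1, hf0, hfm, hfinj, hstep, hKind⟩ := exists_induced_path' K hr hab
  have hm2 : 2 ≤ m := by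
    rcases Nat.lt_or_ge m 2 with h | h
    · have hmm : m = 1 := by omega
      subst hmm
      have h1 := hstep 0 (by omega)
      rw [hf0] at h1
      rw [show (0:ℕ) + 1 = 1 from rfl, hfm] at h1
      exact (h1.2.2.2.1 ⟨rfl, rfl⟩).elim
    · exact h
  have hmem : ∀ i, i ≤ m → (f i = a ∨ f i = b ∨ f i ∈ T) := by
    intro i hi
    rcases Nat.eq_zero_or_pos i with rfl | h
    · exact Or.inl hf0
    · have hs := hstep (i - 1) (by omega)
      have hii : i - 1 + 1 = i := by omega
      rw [hii] at hs
      exact hs.2.2.1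
  have hfa : ∀ i, i ≤ m → f i = a → i = 0 := fun i hi h =>
    hfinj i hi 0 (by omega) (by rw [h, hf0])
  have hfb : ∀ i, i ≤ m → f i = b → i = m := fun i hi h =>
    hfinj i hi m le_rfl (by rw [h, hfm])
  have hTT : ∀ i, 0 < i → i < m → f i ∈ T := by
    intro i h0 h1
    rcases hmem i (by omega) with h | h | h
    · have := hfa i (by omega) h; omega
    · have := hfb i (by omega) h; omega
    · exact h
  refine ⟨m, f, hm2, hf0, hfm, hTT, hfinj, ?_⟩
  intro i hi j hj
  constructor
  · intro hA
    by_cases hij : (i = 0 ∧ j = m) ∨ (i = m ∧ j = 0)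
    · right; right
      refine ⟨?_, hij⟩
      rcases hij with ⟨hi0, hjm⟩ | ⟨him, hj0⟩
      · subst hi0; subst hjm; rwa [hf0, hfm] at hA
      · subst him; subst hj0; rw [hf0, hfm] at hA; exact hA.symm
    · have hKadj : K.Adj (f i) (f j) := by
        refine ⟨hA, hmem i hi, hmem j hj, ?_, ?_⟩
        · rintro ⟨e1, e2⟩
          exact hij (Or.inl ⟨hfa i hi e1, hfb j hj e2⟩)
        · rintro ⟨e1, e2⟩
          exact hij (Or.inr ⟨hfb i hi e1, hfa j hj e2⟩)
      rcases hKind i hi j hj hKadj with h | h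
      · exact Or.inl h
      · exact Or.inr (Or.inl h)
  · rintro (rfl | rfl | ⟨hAab, (⟨hi0, hjm⟩ | ⟨him, hj0⟩)⟩)
    · exact (hstep i (by omega)).1
    · exact ((hstep j (by omega)).1).symm
    · subst hi0; subst hjm; rw [hf0, hfm]; exact hAab
    · subst him; subst hj0; rw [hf0, hfm]; exact hAab.symm

private lemma path_side' {V : Type u} (G : SignedBigraph V) (m : ℕ) (f : ℕ → V)
    (hstep : ∀ i, i < m → G.graph.Adj (f i) (f (i + 1))) :
    ∀ i ≤ m, G.side (f i) = (if Even i then G.side (f 0) else !(G.side (f 0))) := by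
  intro i
  induction i with
  | zero => intro _; simp
  | succ k ih =>
    intro h
    have hk := ih (by omega)
    have hA := G.bipartite (hstep k (by omega))
    have hne : G.side (f (k + 1)) = !(G.side (f k)) := by
      cases h1 : G.side (f k) <;> cases h2 : G.side (f (k + 1)) <;> simp_all
    rw [hne, hk]
    by_cases he : Even k
    · rw [if_pos he, if_neg (by simp [Nat.even_add_one, he])]
    · rw [if_neg he, if_pos (by simp [Nat.even_add_one, he]), Bool.not_not]

private lemma chord_cycle' {V : Type u} (G : SimpleGraph V) (m : ℕ) (f : ℕ → V) (hm : 5 ≤ m)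
    (hinj : ∀ i ≤ m, ∀ j ≤ m, f i = f j → i = j)
    (hadj : ∀ i ≤ m, ∀ j ≤ m, (G.Adj (f i) (f j) ↔
      (j = i + 1 ∨ i = j + 1 ∨ ((i = 0 ∧ j = m) ∨ (i = m ∧ j = 0))))) :
    ∃ n : ℕ, 6 ≤ n ∧ ∃ g : ZMod n → V, Function.Injective g ∧
      ∀ i j : ZMod n, G.Adj (g i) (g j) ↔ (j = i + 1 ∨ i = j + 1) := by
  apply hasLongInducedCycle_of' G (m + 1) (by omega) f
  · intro i hi j hj h; exact hinj i (by omega) j (by omega) h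
  · intro i hi j hj
    rw [hadj i (by omega) j (by omega)]
    constructor
    · intro h; omega
    · intro h; omega

private lemma comp_subset' {V : Type u} (G : SimpleGraph V) (S A B : Set V)
    (hA : IsNontrivialComponentOf G S A) (hB : IsNontrivialComponentOf G S B)
    {v : V} (hvA : v ∈ A) (hvB : v ∈ B) : A ⊆ B := by
  intro u hu
  obtain ⟨w⟩ := hA.2.1.preconnected ⟨v, hvA⟩ ⟨u, hu⟩
  have key : ∀ (x y : ↥A) (_ : (G.induce A).Walk x y), x.val ∈ B → y.val ∈ B := by
    intro x y w
    induction w with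
    | nil => exact id
    | @cons x' z' y' h p ih =>
      intro hx
      apply ih
      exact hB.2.2.1 x'.val hx z'.val (hA.1 z'.2) h
  exact key _ _ w hvB

private lemma comp_disjoint' {V : Type u} (G : SimpleGraph V) (S A B : Set V)
    (hA : IsNontrivialComponentOf G S A) (hB : IsNontrivialComponentOf G S B)
    (hne : A ≠ B) : ∀ v, v ∈ A → v ∈ B → False := fun v h h' =>
  hne (Set.Subset.antisymm (comp_subset' G S A B hA hB h h')
    (comp_subset' G S B A hB hA h' h))

private lemma common_nbr' {V : Type u} (G : SignedBigraph V)
    (hC : ¬ G.HasLongCycle) (S : Set V) {a b : V} (T T' : Set V)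
    (hT : IsNontrivialComponentOf G.graph S T) (hT' : IsNontrivialComponentOf G.graph S T')
    (hdisj : ∀ v, v ∈ T → v ∈ T' → False)
    (ha : a ∈ S) (hb : b ∈ S) (hab : a ≠ b) (hside : G.side a = G.side b)
    (haT : ∃ h ∈ T, G.graph.Adj a h) (hbT : ∃ h ∈ T, G.graph.Adj b h)
    (haT' : ∃ h ∈ T', G.graph.Adj a h) (hbT' : ∃ h ∈ T', G.graph.Adj b h) :
    ∃ c ∈ T, G.Adj a c ∧ G.Adj b c := by
  by_contra hno
  have hcross : ∀ u, u ∈ T → ∀ v, v ∈ T' → ¬ G.graph.Adj u v := by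
    intro u hu v hv hAd
    exact hdisj v (hT.2.2.1 u hu v (hT'.1 hv) hAd) hv
  have hnAdj : ¬ G.graph.Adj a b := fun h => (G.bipartite h) hside
  obtain ⟨m, f, hm2, hf0, hfm, hfT, hfinj, hfadj⟩ := comp_path' G S T hT ha hb hab haT hbT
  obtain ⟨m', f', hm2', hf0', hfm', hfT2, hfinj', hfadj'⟩ :=
    comp_path' G S T' hT' ha hb hab haT' hbT'
  have pure : ∀ i ≤ m, ∀ j ≤ m, (G.graph.Adj (f i) (f j) ↔ (j = i + 1 ∨ i = j + 1)) := by
    intro i hi j hj; rw [hfadj i hi j hj]; tauto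
  have pure' : ∀ i ≤ m', ∀ j ≤ m', (G.graph.Adj (f' i) (f' j) ↔ (j = i + 1 ∨ i = j + 1)) := by
    intro i hi j hj; rw [hfadj' i hi j hj]; tauto
  have hpar := path_side' G m f
    (fun i hi => (pure i (by omega) (i + 1) (by omega)).mpr (Or.inl rfl)) m le_rfl
  rw [hf0, hfm] at hpar
  have hEm : Even m := by
    by_contra hh
    rw [if_neg hh, hside] at hpar
    cases hx : G.side b <;> rw [hx] at hpar <;> simp at hpar
  have hm4 : 4 ≤ m := by
    by_contra hh
    have hmm : m = 2 := by
      have := Nat.even_iff.mp hEm; omega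
    have hA1 : G.graph.Adj a (f 1) := by
      have := (pure 0 (by omega) 1 (by omega)).mpr (Or.inl rfl)
      rwa [hf0] at this
    have hA2 : G.graph.Adj b (f 1) := by
      have := (pure m le_rfl 1 (by omega)).mpr (Or.inr (by omega))
      rwa [hfm] at this
    exact hno ⟨f 1, hfT 1 (by omega) (by omega), hA1, hA2⟩
  exact hC (glue_cycle' G.graph m m' f f' (by omega) (by omega) (by omega)
    (hf0.trans hf0'.symm) (hfm.trans hfm'.symm) hfinj hfinj'
    (fun i e1 e2 j e3 e4 he => hdisj (f i) (hfT i e1 e2) (by rw [he]; exact hfT2 j e3 e4))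
    pure pure' (fun i e1 e2 j e3 e4 => hcross (f i) (hfT i e1 e2) (f' j) (hfT2 j e3 e4)))

end AuxProofs

open SignedBigraph in
/-- Lemma 4.1: in a signed separable bigraph with no induced
member of `𝒞 ∪ D`, a set `S` minimally separating the non-trivial components `H`
and `H'` induces a positive biclique, and any two vertices of `S` in the same
partite set have common neighbours in `H` and in `H'`. -/
theorem minimallySeparating_positiveBiclique
    {V : Type u} (G : SignedBigraph V)
    (hsep : IsSeparableGraph G.graph)
    (hC : ¬ G.HasLongCycle) (hD : ¬ G.HasD)
    (S H H' : Set V)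
    (hmin : MinimallySeparates G.graph S H H') :
    (∀ a ∈ S, ∀ b ∈ S, G.side a ≠ G.side b → G.Adj a b ∧ G.sign a b = true) ∧
    (∀ a ∈ S, ∀ b ∈ S, a ≠ b → G.side a = G.side b →
      (∃ c ∈ H, G.Adj a c ∧ G.Adj b c) ∧ (∃ c ∈ H', G.Adj a c ∧ G.Adj b c)) := by
  obtain ⟨hH, hH', hneHH, hS⟩ := hmin
  have hdisj : ∀ v, v ∈ H → v ∈ H' → False :=
    comp_disjoint' G.graph S H H' hH hH' hneHH
  have hcross : ∀ u, u ∈ H → ∀ v, v ∈ H' → ¬ G.graph.Adj u v := by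
    intro u hu v hv hAd
    exact hdisj v (hH.2.2.1 u hu v (hH'.1 hv) hAd) hv
  constructor
  · -- positive biclique
    intro a ha b hb hside
    have hab : a ≠ b := fun h => hside (by rw [h])
    obtain ⟨m, f, hm2, hf0, hfm, hfT, hfinj, hfadj⟩ :=
      comp_path' G S H hH ha hb hab (hS a ha).1 (hS b hb).1
    obtain ⟨m', f', hm2', hf0', hfm', hfT', hfinj', hfadj'⟩ :=
      comp_path' G S H' hH' ha hb hab (hS a ha).2 (hS b hb).2
    have hstepf : ∀ i, i < m → G.graph.Adj (f i) (f (i + 1)) :=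
      fun i hi => (hfadj i (by omega) (i + 1) (by omega)).mpr (Or.inl rfl)
    have hstepf' : ∀ i, i < m' → G.graph.Adj (f' i) (f' (i + 1)) :=
      fun i hi => (hfadj' i (by omega) (i + 1) (by omega)).mpr (Or.inl rfl)
    have hparf := path_side' G m f hstepf m le_rfl
    rw [hf0, hfm] at hparf
    have hparf' := path_side' G m' f' hstepf' m' le_rfl
    rw [hf0', hfm'] at hparf'
    have hOm : ¬ Even m := by
      intro he; rw [if_pos he] at hparf; exact hside hparf.symm
    have hOm' : ¬ Even m' := by
      intro he; rw [if_pos he] at hparf'; exact hside hparf'.symm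
    have hmod := Nat.not_even_iff.mp hOm
    have hmod' := Nat.not_even_iff.mp hOm'
    have hcne : ∀ i, 0 < i → i < m → ∀ j, 0 < j → j < m' → f i ≠ f' j := by
      intro i e1 e2 j e3 e4 he
      exact hdisj (f i) (hfT i e1 e2) (by rw [he]; exact hfT' j e3 e4)
    have hcadj : ∀ i, 0 < i → i < m → ∀ j, 0 < j → j < m' → ¬ G.graph.Adj (f i) (f' j) :=
      fun i e1 e2 j e3 e4 => hcross (f i) (hfT i e1 e2) (f' j) (hfT' j e3 e4)
    have hAdj : G.graph.Adj a b := by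
      by_contra hnAdj
      have pure : ∀ i ≤ m, ∀ j ≤ m, (G.graph.Adj (f i) (f j) ↔ (j = i + 1 ∨ i = j + 1)) := by
        intro i hi j hj; rw [hfadj i hi j hj]; tauto
      have pure' : ∀ i ≤ m', ∀ j ≤ m',
          (G.graph.Adj (f' i) (f' j) ↔ (j = i + 1 ∨ i = j + 1)) := by
        intro i hi j hj; rw [hfadj' i hi j hj]; tauto
      exact hC (glue_cycle' G.graph m m' f f' (by omega) (by omega) (by omega)
        (hf0.trans hf0'.symm) (hfm.trans hfm'.symm) hfinj hfinj' hcne pure pure' hcadj)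
    refine ⟨hAdj, ?_⟩
    by_contra hsgn
    rw [Bool.not_eq_true] at hsgn
    by_cases hm5 : 5 ≤ m
    · exact hC (chord_cycle' G.graph m f hm5 hfinj (by
        intro i hi j hj; rw [hfadj i hi j hj]; tauto))
    by_cases hm5' : 5 ≤ m'
    · exact hC (chord_cycle' G.graph m' f' hm5' hfinj' (by
        intro i hi j hj; rw [hfadj' i hi j hj]; tauto))
    have hm3 : m = 3 := by omega
    have hm3' : m' = 3 := by omega
    subst hm3; subst hm3'
    -- build a member of D and contradict hD
    have d1 : f 2 ≠ a := fun h => by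
      have := hfinj 2 (by omega) 0 (by omega) (h.trans hf0.symm); omega
    have d2 : f 2 ≠ f' 2 := hcne 2 (by omega) (by omega) 2 (by omega) (by omega)
    have d3 : f 2 ≠ f 1 := fun h => by
      have := hfinj 2 (by omega) 1 (by omega) h; omega
    have d4 : f 2 ≠ b := fun h => by
      have := hfinj 2 (by omega) 3 (by omega) (h.trans hfm.symm); omega
    have d5 : f 2 ≠ f' 1 := hcne 2 (by omega) (by omega) 1 (by omega) (by omega)
    have d6 : a ≠ f' 2 := fun h => by
      have := hfinj' 0 (by omega) 2 (by omega) (hf0'.trans h); omega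
    have d7 : a ≠ f 1 := fun h => by
      have := hfinj 0 (by omega) 1 (by omega) (hf0.trans h); omega
    have d8 : a ≠ b := hab
    have d9 : a ≠ f' 1 := fun h => by
      have := hfinj' 0 (by omega) 1 (by omega) (hf0'.trans h); omega
    have d10 : f' 2 ≠ f 1 :=
      (hcne 1 (by omega) (by omega) 2 (by omega) (by omega)).symm
    have d11 : f' 2 ≠ b := fun h => by
      have := hfinj' 2 (by omega) 3 (by omega) (h.trans hfm'.symm); omega
    have d12 : f' 2 ≠ f' 1 := fun h => by
      have := hfinj' 2 (by omega) 1 (by omega) h; omega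
    have d13 : f 1 ≠ b := fun h => by
      have := hfinj 1 (by omega) 3 (by omega) (h.trans hfm.symm); omega
    have d14 : f 1 ≠ f' 1 := hcne 1 (by omega) (by omega) 1 (by omega) (by omega)
    have d15 : b ≠ f' 1 := fun h => by
      have := hfinj' 3 (by omega) 1 (by omega) (hfm'.trans h); omega
    apply hD
    refine ⟨f 2, a, f' 2, f 1, b, f' 1, ?_, ?_, ?_, ?_, ?_, ?_, ?_, hAdj, hsgn,
      ?_, ?_, ?_, ?_, ?_, ?_, ?_, ?_⟩
    · simp only [List.pairwise_cons, List.mem_cons, List.mem_singleton,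
        List.not_mem_nil, or_false, List.Pairwise.nil]
      refine ⟨?_, ?_, ?_, ?_, ?_, ?_⟩ <;> try (intro z hz)
      · rcases hz with rfl | rfl | rfl | rfl | rfl
        exacts [d1, d2, d3, d4, d5]
      · rcases hz with rfl | rfl | rfl | rfl
        exacts [d6, d7, d8, d9]
      · rcases hz with rfl | rfl | rfl
        exacts [d10, d11, d12]
      · rcases hz with rfl | rfl
        exacts [d13, d14]
      · rcases hz with rfl
        exact d15
      · exact ⟨fun z hz => hz.elim, trivial⟩
    · exact (hfadj 2 (by omega) 1 (by omega)).mpr (Or.inr (Or.inl rfl))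
    · have := (hfadj 1 (by omega) 0 (by omega)).mpr (Or.inr (Or.inl rfl))
      rwa [hf0] at this
    · have := (hfadj' 0 (by omega) 1 (by omega)).mpr (Or.inl rfl)
      rwa [hf0'] at this
    · exact (hfadj' 1 (by omega) 2 (by omega)).mpr (Or.inl rfl)
    · have := (hfadj' 2 (by omega) 3 (by omega)).mpr (Or.inl rfl)
      rwa [hfm'] at this
    · have := (hfadj 3 (by omega) 2 (by omega)).mpr (Or.inr (Or.inl rfl))
      rwa [hfm] at this
    · exact hcadj 2 (by omega) (by omega) 1 (by omega) (by omega)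
    · exact fun h => hcadj 1 (by omega) (by omega) 2 (by omega) (by omega) h.symm
    · intro h
      rw [← hf0] at h
      rcases (hfadj 2 (by omega) 0 (by omega)).mp h with h | h | ⟨-, h | h⟩ <;> omega
    · exact hcadj 2 (by omega) (by omega) 2 (by omega) (by omega)
    · intro h
      rw [← hf0'] at h
      rcases (hfadj' 0 (by omega) 2 (by omega)).mp h with h | h | ⟨-, h | h⟩ <;> omega
    · intro h
      rw [← hfm] at h
      rcases (hfadj 1 (by omega) 3 (by omega)).mp h with h | h | ⟨-, h | h⟩ <;> omega
    · exact hcadj 1 (by omega) (by omega) 1 (by omega) (by omega)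
    · intro h
      rw [← hfm'] at h
      rcases (hfadj' 3 (by omega) 1 (by omega)).mp h with h | h | ⟨-, h | h⟩ <;> omega
  · -- common neighbours
    intro a ha b hb hab hside
    exact ⟨common_nbr' G hC S H H' hH hH' hdisj ha hb hab hside
        (hS a ha).1 (hS b hb).1 (hS a ha).2 (hS b hb).2,
      common_nbr' G hC S H' H hH' hH (fun v h h' => hdisj v h' h) ha hb hab hside
        (hS a ha).2 (hS b hb).2 (hS a ha).1 (hS b hb).1⟩
end
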